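/- arXiv:0707.1361 — 4 statements merged into one kernel-verified Lean document; each statement's English description precedes it below -/
import Mathlib

section
/- Let Φ ∈ k[x][y] be nonzero, g ∈ k[x] nonzero, and w ∈ Γ^n. Then the following four conditions are equivalent: (1) m_w^g(Φ) = 0; (2) deg_w^g Φ = deg_w Φ(g); (3) Φ^{w,g}(g^w) ≠ 0; (4) Φ(g) ≠ 0 and Φ(g)^w = Φ^{w,g}(g^w). -/
set_option linter.unusedSectionVars false


open MvPolynomial Polynomial

set_option synthInstance.maxHeartbeats 1000000
set_option maxHeartbeats 1000000

variable {k : Type*} [Field k] [CharZero k] {n : ℕ}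
variable {Γ : Type*} [AddCommGroup Γ] [LinearOrder Γ] [IsOrderedAddMonoid Γ]

/-- The `w`-degree of a multivariate polynomial, with `wdeg w 0 = ⊥ = -∞`. -/
noncomputable def wdeg (w : Fin n → Γ) (f : MvPolynomial (Fin n) k) : WithBot Γ :=
  f.support.sup fun d => ((∑ i, d i • w i : Γ) : WithBot Γ)

/-- The leading `w`-homogeneous form `f^w` of `f`. -/
noncomputable def lform (w : Fin n → Γ) (f : MvPolynomial (Fin n) k) :
    MvPolynomial (Fin n) k :=
  letI : DecidableEq (WithBot Γ) := Classical.decEq _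
  ∑ d ∈ f.support.filter
      (fun d => ((∑ i, d i • w i : Γ) : WithBot Γ) = wdeg w f),
    MvPolynomial.monomial d (f.coeff d)

/-- `deg_w^g Φ = max_i deg_w (φ_i g^i)` for `Φ = Σ_i φ_i y^i`. -/
noncomputable def wdegG (w : Fin n → Γ) (g : MvPolynomial (Fin n) k)
    (Φ : Polynomial (MvPolynomial (Fin n) k)) : WithBot Γ :=
  Φ.support.sup fun i => wdeg w (Φ.coeff i * g ^ i)

/-- The leading form `Φ^{w,g}` of `Φ` for the grading in which `x_j` has weight `w_j`
and `y` has weight `deg_w g`: the sum of `φ_i^w y^i` over those `i` with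
`deg_w (φ_i g^i) = deg_w^g Φ`. -/
noncomputable def pLform (w : Fin n → Γ) (g : MvPolynomial (Fin n) k)
    (Φ : Polynomial (MvPolynomial (Fin n) k)) : Polynomial (MvPolynomial (Fin n) k) :=
  letI : DecidableEq (WithBot Γ) := Classical.decEq _
  ∑ i ∈ Φ.support.filter (fun i => wdeg w (Φ.coeff i * g ^ i) = wdegG w g Φ),
    Polynomial.C (lform w (Φ.coeff i)) * Polynomial.X ^ i

/-- `m_w^g(Φ) = min { i : deg_w^g (∂_y^i Φ) = deg_w ((∂_y^i Φ)(g)) }`. -/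
noncomputable def mwg (w : Fin n → Γ) (g : MvPolynomial (Fin n) k)
    (Φ : Polynomial (MvPolynomial (Fin n) k)) : ℕ :=
  sInf {i : ℕ |
    wdegG w g (Polynomial.derivative^[i] Φ) = wdeg w ((Polynomial.derivative^[i] Φ).eval g)}

/-- The `w`-degree of the differential form `dh_1 ∧ ⋯ ∧ dh_s`: the maximum over all
`s`-tuples of indices of the `w`-degree of the corresponding `s × s` Jacobian minor
plus the sum of the corresponding weights (noninjective tuples contribute `⊥`). -/
noncomputable def wedgeDeg (w : Fin n → Γ) {s : ℕ} (h : Fin s → MvPolynomial (Fin n) k) :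
    WithBot Γ :=
  Finset.univ.sup fun e : Fin s → Fin n =>
    wdeg w (Matrix.det (Matrix.of fun a b : Fin s => MvPolynomial.pderiv (e b) (h a)))
      + ((∑ b, w (e b) : Γ) : WithBot Γ)

/-- The initial algebra `A^w`: the `k`-subalgebra generated by `f^w` for `f ∈ A \ {0}`. -/
noncomputable def initAlg (w : Fin n → Γ) (A : Subalgebra k (MvPolynomial (Fin n) k)) :
    Subalgebra k (MvPolynomial (Fin n) k) :=
  Algebra.adjoin k (lform w '' ((A : Set (MvPolynomial (Fin n) k)) \ {0}))

/-- The field of fractions `K^w` of `A^w`, realized as a subfield of the fraction field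
of `k[x]`. -/
noncomputable def KW (w : Fin n → Γ) (A : Subalgebra k (MvPolynomial (Fin n) k)) :
    Subfield (FractionRing (MvPolynomial (Fin n) k)) :=
  Subfield.closure
    (algebraMap (MvPolynomial (Fin n) k) (FractionRing (MvPolynomial (Fin n) k)) ''
      (initAlg w A : Set (MvPolynomial (Fin n) k)))

/-- The field of fractions of a subalgebra `A` of `k[x]`, realized as a subfield of the
fraction field of `k[x]`. -/
noncomputable def fracSub (A : Subalgebra k (MvPolynomial (Fin n) k)) :
    Subfield (FractionRing (MvPolynomial (Fin n) k)) :=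
  Subfield.closure
    (algebraMap (MvPolynomial (Fin n) k) (FractionRing (MvPolynomial (Fin n) k)) ''
      (A : Set (MvPolynomial (Fin n) k)))

/-- A polynomial is `w`-homogeneous if all its monomials have the same `w`-degree. -/
def IsWHom (w : Fin n → Γ) (f : MvPolynomial (Fin n) k) : Prop :=
  ∃ γ : Γ, ∀ d ∈ f.support, (∑ i, d i • w i : Γ) = γ

set_option linter.unusedSectionVars false

namespace StmtAux

abbrev dw (w : Fin n → Γ) (d : Fin n →₀ ℕ) : Γ := ∑ i, d i • w i

lemma dw_add (w : Fin n → Γ) (a b : Fin n →₀ ℕ) : dw w (a + b) = dw w a + dw w b := by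
  simp [dw, add_smul, Finset.sum_add_distrib]

variable {w : Fin n → Γ} {f g : MvPolynomial (Fin n) k}

lemma wdeg_def (w : Fin n → Γ) (f : MvPolynomial (Fin n) k) :
    wdeg w f = f.support.sup fun d => ((dw w d : Γ) : WithBot Γ) := rfl

lemma le_wdeg {d : Fin n →₀ ℕ} (hd : d ∈ f.support) :
    ((dw w d : Γ) : WithBot Γ) ≤ wdeg w f := Finset.le_sup (f := fun d => ((dw w d : Γ) : WithBot Γ)) hd

lemma wdeg_eq_bot_iff : wdeg w f = ⊥ ↔ f = 0 := by
  rw [wdeg_def, Finset.sup_eq_bot_iff]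
  constructor
  · intro h
    by_contra hf
    obtain ⟨d, hd⟩ := (MvPolynomial.support_nonempty.2 hf)
    exact WithBot.coe_ne_bot (h d hd)
  · intro h; subst h; simp

lemma wdeg_ne_bot (hf : f ≠ 0) : wdeg w f ≠ ⊥ := fun h => hf (wdeg_eq_bot_iff.1 h)

lemma coeff_lform (d : Fin n →₀ ℕ) :
    (lform w f).coeff d =
      (letI : DecidableEq (WithBot Γ) := Classical.decEq _
       if ((dw w d : Γ) : WithBot Γ) = wdeg w f then f.coeff d else 0) := by
  letI : DecidableEq (WithBot Γ) := Classical.decEq _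
  rw [lform, MvPolynomial.coeff_sum]
  simp only [MvPolynomial.coeff_monomial]
  rw [Finset.sum_ite_eq' (ι := Fin n →₀ ℕ) _ d (fun e => MvPolynomial.coeff e f)]
  by_cases h : ((dw w d : Γ) : WithBot Γ) = wdeg w f
  · rw [if_pos h]
    by_cases hd : d ∈ f.support
    · rw [if_pos (Finset.mem_filter.2 ⟨hd, h⟩)]
    · rw [if_neg, MvPolynomial.notMem_support_iff.1 hd]
      intro hmem; exact hd (Finset.mem_filter.1 hmem).1
  · rw [if_neg h, if_neg]
    intro hmem; exact h (Finset.mem_filter.1 hmem).2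

lemma lform_ne_zero (hf : f ≠ 0) : lform w f ≠ 0 := by
  obtain ⟨d, hd, hsup⟩ := Finset.exists_mem_eq_sup f.support
    (MvPolynomial.support_nonempty.2 hf) (fun d => ((dw w d : Γ) : WithBot Γ))
  intro h0
  have := coeff_lform (w := w) (f := f) d
  rw [h0] at this
  simp only [MvPolynomial.coeff_zero] at this
  rw [if_pos (by rw [wdeg_def, hsup])] at this
  exact (MvPolynomial.mem_support_iff.1 hd) this.symm

/-- homogeneity predicate -/
def Hom (w : Fin n → Γ) (γ : Γ) (f : MvPolynomial (Fin n) k) : Prop :=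
  ∀ d ∈ f.support, dw w d = γ

lemma hom_wdeg {γ : Γ} (h : Hom w γ f) (hf : f ≠ 0) : wdeg w f = γ := by
  obtain ⟨d, hd⟩ := (MvPolynomial.support_nonempty.2 hf)
  refine le_antisymm (Finset.sup_le fun e he => ?_) ?_
  · exact le_of_eq (by exact_mod_cast h e he)
  · rw [← h d hd]; exact le_wdeg hd

lemma hom_lform {γ : Γ} (h : Hom w γ f) : lform w f = f := by
  ext d
  rw [coeff_lform]
  split_ifs with hc
  · rfl
  · by_contra hne
    have hd : d ∈ f.support := MvPolynomial.mem_support_iff.2 fun h0 => hne (h0 ▸ rfl)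
    have hf : f ≠ 0 := fun h0 => by simp [h0] at hd
    exact hc (by rw [h d hd, hom_wdeg h hf])

lemma lform_hom {γ : Γ} (h : wdeg w f = (γ : WithBot Γ)) : Hom w γ (lform w f) := by
  intro d hd
  have := coeff_lform (w := w) (f := f) d
  rw [MvPolynomial.mem_support_iff] at hd
  by_cases hc : ((dw w d : Γ) : WithBot Γ) = wdeg w f
  · rw [h] at hc; exact_mod_cast hc
  · rw [if_neg hc] at this; exact absurd this hd

lemma hom_mul {γ δ : Γ} (hf : Hom w γ f) (hg : Hom w δ g) : Hom w (γ + δ) (f * g) := by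
  classical
  intro d hd
  have := MvPolynomial.support_mul f g hd
  obtain ⟨a, ha, b, hb, rfl⟩ := Finset.mem_add.1 this
  rw [dw_add, hf a ha, hg b hb]

lemma wdeg_mul_le : wdeg w (f * g) ≤ wdeg w f + wdeg w g := by
  classical
  refine Finset.sup_le fun d hd => ?_
  obtain ⟨a, ha, b, hb, rfl⟩ := Finset.mem_add.1 (MvPolynomial.support_mul f g hd)
  show ((dw w (a + b) : Γ) : WithBot Γ) ≤ _
  rw [dw_add, WithBot.coe_add]
  exact add_le_add (le_wdeg ha) (le_wdeg hb)

lemma wdeg_add_le : wdeg w (f + g) ≤ max (wdeg w f) (wdeg w g) := by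
  classical
  refine Finset.sup_le fun d hd => ?_
  rcases Finset.mem_union.1 (MvPolynomial.support_add hd) with h | h
  · exact le_max_of_le_left (le_wdeg h)
  · exact le_max_of_le_right (le_wdeg h)

lemma sub_lform_lt (hf : f ≠ 0) : wdeg w (f - lform w f) < wdeg w f := by
  have hbot : (⊥ : WithBot Γ) < wdeg w f :=
    lt_of_le_of_ne bot_le (Ne.symm (wdeg_ne_bot hf))
  rw [wdeg_def]
  rw [Finset.sup_lt_iff hbot]
  intro d hd
  rw [MvPolynomial.mem_support_iff, MvPolynomial.coeff_sub, coeff_lform] at hd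
  split_ifs at hd with hc
  · simp at hd
  · have hds : d ∈ f.support := by
      rw [MvPolynomial.mem_support_iff]; intro h0; rw [h0] at hd; simp at hd
    exact lt_of_le_of_ne (le_wdeg hds) hc

lemma add_of_lt (h : wdeg w g < wdeg w f) :
    wdeg w (f + g) = wdeg w f ∧ lform w (f + g) = lform w f := by
  have hf : f ≠ 0 := by
    intro h0; rw [h0, wdeg_eq_bot_iff.2 rfl] at h; exact not_lt_bot h
  have key : ∀ d : Fin n →₀ ℕ, ((dw w d : Γ) : WithBot Γ) = wdeg w f → g.coeff d = 0 := by
    intro d hd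
    by_contra h0
    have : d ∈ g.support := MvPolynomial.mem_support_iff.2 h0
    exact absurd (hd ▸ le_wdeg this) (not_le.2 h)
  have hle : wdeg w (f + g) ≤ wdeg w f := by
    refine le_trans wdeg_add_le (max_le le_rfl h.le)
  obtain ⟨d, hd, hsup⟩ := Finset.exists_mem_eq_sup f.support
    (MvPolynomial.support_nonempty.2 hf) (fun d => ((dw w d : Γ) : WithBot Γ))
  have hdtop : ((dw w d : Γ) : WithBot Γ) = wdeg w f := by rw [wdeg_def, hsup]
  have hcoeff : (f + g).coeff d = f.coeff d := by
    rw [MvPolynomial.coeff_add, key d hdtop, add_zero]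
  have hdmem : d ∈ (f + g).support := by
    rw [MvPolynomial.mem_support_iff, hcoeff]
    exact MvPolynomial.mem_support_iff.1 hd
  have hge : wdeg w f ≤ wdeg w (f + g) := hdtop ▸ le_wdeg hdmem
  have heq : wdeg w (f + g) = wdeg w f := le_antisymm hle hge
  refine ⟨heq, ?_⟩
  ext e
  rw [coeff_lform, coeff_lform, heq]
  split_ifs with hc
  · rw [MvPolynomial.coeff_add, key e hc, add_zero]
  · rfl

lemma wdeg_lform (hf : f ≠ 0) : wdeg w (lform w f) = wdeg w f := by
  obtain ⟨γ, hγ⟩ := WithBot.ne_bot_iff_exists.1 (wdeg_ne_bot (w := w) hf)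
  rw [← hγ]
  exact hom_wdeg (lform_hom hγ.symm) (lform_ne_zero hf)

lemma wdeg_mul (hf : f ≠ 0) (hg : g ≠ 0) :
    wdeg w (f * g) = wdeg w f + wdeg w g ∧ lform w (f * g) = lform w f * lform w g := by
  obtain ⟨γ, hγ⟩ := WithBot.ne_bot_iff_exists.1 (wdeg_ne_bot (w := w) (f := f) hf)
  obtain ⟨δ, hδ⟩ := WithBot.ne_bot_iff_exists.1 (wdeg_ne_bot (w := w) (f := g) hg)
  set P := lform w f * lform w g with hP
  have hPne : P ≠ 0 := mul_ne_zero (lform_ne_zero hf) (lform_ne_zero hg)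
  have hPhom : Hom w (γ + δ) P := hom_mul (lform_hom hγ.symm) (lform_hom hδ.symm)
  have hPdeg : wdeg w P = ((γ + δ : Γ) : WithBot Γ) := hom_wdeg hPhom hPne
  have hsplit : f * g = P + (lform w f * (g - lform w g) + (f - lform w f) * g) := by
    ring
  have hQ : wdeg w (lform w f * (g - lform w g) + (f - lform w f) * g) < wdeg w P := by
    refine lt_of_le_of_lt wdeg_add_le (max_lt ?_ ?_)
    · refine lt_of_le_of_lt wdeg_mul_le ?_
      rw [hPdeg, WithBot.coe_add, wdeg_lform hf, ← hγ]
      exact WithBot.add_lt_add_left WithBot.coe_ne_bot (hδ ▸ sub_lform_lt hg)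
    · refine lt_of_le_of_lt wdeg_mul_le ?_
      rw [hPdeg, WithBot.coe_add, ← hδ]
      exact WithBot.add_lt_add_right WithBot.coe_ne_bot (hγ ▸ sub_lform_lt hf)
  obtain ⟨h1, h2⟩ := add_of_lt hQ
  rw [← hsplit] at h1 h2
  exact ⟨by rw [h1, hPdeg, ← hγ, ← hδ, WithBot.coe_add], by rw [h2, hom_lform hPhom]⟩

lemma lform_one : lform w (1 : MvPolynomial (Fin n) k) = 1 := by
  refine hom_lform (γ := 0) ?_
  intro d hd
  have hd0 : d = 0 := by
    by_contra hne
    rw [MvPolynomial.mem_support_iff, MvPolynomial.coeff_one, if_neg (Ne.symm hne)] at hd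
    exact hd rfl
  subst hd0
  simp [dw]

variable {w : Fin n → Γ} {f g : MvPolynomial (Fin n) k}

lemma lform_pow (hg : g ≠ 0) (i : ℕ) : lform w (g ^ i) = (lform w g) ^ i := by
  induction i with
  | zero => simpa using lform_one
  | succ i ih => rw [pow_succ, (wdeg_mul (pow_ne_zero i hg) hg).2, ih, pow_succ]

lemma wdeg_sum_le {ι : Type*} (s : Finset ι) (F : ι → MvPolynomial (Fin n) k) :
    wdeg w (∑ i ∈ s, F i) ≤ s.sup fun i => wdeg w (F i) := by
  classical
  induction s using Finset.induction with
  | empty =>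
      rw [Finset.sum_empty, Finset.sup_empty, wdeg_eq_bot_iff.2 rfl]
  | insert _ _ h ih =>
      rw [Finset.sum_insert h, Finset.sup_insert]
      exact le_trans wdeg_add_le (max_le_max le_rfl ih)

lemma hom_sum {ι : Type*} {γ : Γ} {s : Finset ι} {F : ι → MvPolynomial (Fin n) k}
    (h : ∀ i ∈ s, Hom w γ (F i)) : Hom w γ (∑ i ∈ s, F i) := by
  intro d hd
  rw [MvPolynomial.mem_support_iff, MvPolynomial.coeff_sum] at hd
  by_contra hne
  apply hd
  refine Finset.sum_eq_zero fun i hi => ?_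
  by_contra h0
  exact hne (h i hi d (MvPolynomial.mem_support_iff.2 h0))


lemma key (Φ : Polynomial (MvPolynomial (Fin n) k)) (hΦ : Φ ≠ 0)
    (g : MvPolynomial (Fin n) k) (hg : g ≠ 0) (w : Fin n → Γ) :
    (wdegG w g Φ = wdeg w (Φ.eval g) ↔ (pLform w g Φ).eval (lform w g) ≠ 0) ∧
    ((Φ.eval g ≠ 0 ∧ lform w (Φ.eval g) = (pLform w g Φ).eval (lform w g)) ↔
      (pLform w g Φ).eval (lform w g) ≠ 0) := by
  letI : DecidableEq (WithBot Γ) := Classical.decEq (WithBot Γ)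
  have hterm : ∀ i ∈ Φ.support, Φ.coeff i * g ^ i ≠ 0 := fun i hi =>
    mul_ne_zero (Polynomial.mem_support_iff.1 hi) (pow_ne_zero i hg)
  obtain ⟨i0, hi0⟩ : Φ.support.Nonempty :=
    Finset.nonempty_iff_ne_empty.2 fun h => hΦ (Polynomial.support_eq_empty.1 h)
  have hMbot : wdegG w g Φ ≠ ⊥ := by
    intro hb
    have hle : wdeg w (Φ.coeff i0 * g ^ i0) ≤ wdegG w g Φ :=
      Finset.le_sup (f := fun i => wdeg w (Φ.coeff i * g ^ i)) hi0
    rw [hb, le_bot_iff] at hle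
    exact wdeg_ne_bot (hterm i0 hi0) hle
  obtain ⟨μ, hμ⟩ := WithBot.ne_bot_iff_exists.1 hMbot
  have hSeval : (pLform w g Φ).eval (lform w g) =
      ∑ i ∈ Φ.support.filter (fun i => wdeg w (Φ.coeff i * g ^ i) = wdegG w g Φ),
        lform w (Φ.coeff i * g ^ i) := by
    rw [pLform, Polynomial.eval_finset_sum]
    refine Finset.sum_congr rfl fun i hi => ?_
    have hi' := Finset.mem_filter.1 hi
    rw [Polynomial.eval_mul, Polynomial.eval_C, Polynomial.eval_pow, Polynomial.eval_X,
      (wdeg_mul (Polynomial.mem_support_iff.1 hi'.1) (pow_ne_zero i hg)).2,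
      lform_pow hg]
  set T := Φ.support.filter (fun i => wdeg w (Φ.coeff i * g ^ i) = wdegG w g Φ) with hT
  set S := ∑ i ∈ T, lform w (Φ.coeff i * g ^ i) with hS
  have hhom : Hom w μ S := by
    refine hom_sum fun i hi => ?_
    have hi' := Finset.mem_filter.1 hi
    exact lform_hom (by rw [hi'.2, ← hμ])
  have hsplit : Φ.eval g = S +
      (∑ i ∈ T, (Φ.coeff i * g ^ i - lform w (Φ.coeff i * g ^ i)) +
       ∑ i ∈ Φ.support \ T, Φ.coeff i * g ^ i) := by
    rw [Finset.sum_sub_distrib, hS]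
    rw [Polynomial.eval_eq_sum, Polynomial.sum_def,
      ← Finset.sum_sdiff (show T ⊆ Φ.support from Finset.filter_subset _ _)]
    abel
  have hbot : (⊥ : WithBot Γ) < wdegG w g Φ := Ne.bot_lt hMbot
  have hRlt : wdeg w
      (∑ i ∈ T, (Φ.coeff i * g ^ i - lform w (Φ.coeff i * g ^ i)) +
       ∑ i ∈ Φ.support \ T, Φ.coeff i * g ^ i) < wdegG w g Φ := by
    refine lt_of_le_of_lt wdeg_add_le (max_lt ?_ ?_)
    · refine lt_of_le_of_lt (wdeg_sum_le _ _) ((Finset.sup_lt_iff hbot).2 fun i hi => ?_)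
      have hi' := Finset.mem_filter.1 hi
      have := sub_lform_lt (w := w) (hterm i hi'.1)
      rwa [hi'.2] at this
    · refine lt_of_le_of_lt (wdeg_sum_le _ _) ((Finset.sup_lt_iff hbot).2 fun i hi => ?_)
      obtain ⟨his, hnot⟩ := Finset.mem_sdiff.1 hi
      refine lt_of_le_of_ne
        (Finset.le_sup (f := fun i => wdeg w (Φ.coeff i * g ^ i)) his) fun he => ?_
      exact hnot (Finset.mem_filter.2 ⟨his, he⟩)
  rw [hSeval]
  by_cases hS0 : S = 0
  · have hev : wdeg w (Φ.eval g) < wdegG w g Φ := by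
      rw [hsplit, hS0, zero_add]; exact hRlt
    constructor
    · exact ⟨fun h => absurd (h ▸ hev) (lt_irrefl _), fun h => absurd hS0 h⟩
    · exact ⟨fun ⟨hne, hlf⟩ => fun _ => (lform_ne_zero hne) (hlf.trans hS0),
        fun h => absurd hS0 h⟩
  · have hSdeg : wdeg w S = wdegG w g Φ := by rw [hom_wdeg hhom hS0, hμ]
    have hlt : wdeg w
        (∑ i ∈ T, (Φ.coeff i * g ^ i - lform w (Φ.coeff i * g ^ i)) +
         ∑ i ∈ Φ.support \ T, Φ.coeff i * g ^ i) < wdeg w S := hSdeg ▸ hRlt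
    obtain ⟨hdeg, hlf⟩ := add_of_lt hlt
    rw [← hsplit] at hdeg hlf
    have h2 : wdeg w (Φ.eval g) = wdegG w g Φ := by rw [hdeg, hSdeg]
    have hne : Φ.eval g ≠ 0 := fun h0 => by
      rw [h0, wdeg_eq_bot_iff.2 rfl] at h2; exact hMbot h2.symm
    have h4 : lform w (Φ.eval g) = S := by rw [hlf, hom_lform hhom]
    exact ⟨⟨fun _ => hS0, fun _ => h2.symm⟩, ⟨fun _ => hS0, fun _ => ⟨hne, h4⟩⟩⟩


lemma cond_C {w : Fin n → Γ} {g : MvPolynomial (Fin n) k} {c : MvPolynomial (Fin n) k}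
    (hc : c ≠ 0) :
    wdegG w g (Polynomial.C c) = wdeg w ((Polynomial.C c).eval g) := by
  rw [Polynomial.eval_C, wdegG, Polynomial.support_C hc, Finset.sup_singleton,
    Polynomial.coeff_C_zero, pow_zero, mul_one]

lemma setS_nonempty (Φ : Polynomial (MvPolynomial (Fin n) k)) (hΦ : Φ ≠ 0)
    (g : MvPolynomial (Fin n) k) (w : Fin n → Γ) :
    Φ.natDegree ∈ {i : ℕ |
      wdegG w g (Polynomial.derivative^[i] Φ) =
        wdeg w ((Polynomial.derivative^[i] Φ).eval g)} := by
  set N := Φ.natDegree with hN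
  set Ψ := Polynomial.derivative^[N] Φ with hΨ
  have hc : Ψ.coeff 0 ≠ 0 := by
    rw [hΨ, Polynomial.coeff_iterate_derivative, zero_add, Nat.descFactorial_self,
      nsmul_eq_mul]
    exact mul_ne_zero (Nat.cast_ne_zero.2 (Nat.factorial_ne_zero N))
      (Polynomial.leadingCoeff_ne_zero.2 hΦ)
  have hΨC : Ψ = Polynomial.C (Ψ.coeff 0) := by
    refine Polynomial.eq_C_of_natDegree_le_zero ?_
    have h := Polynomial.natDegree_iterate_derivative Φ N
    rw [hN, Nat.sub_self] at h
    exact hΨ ▸ h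
  show wdegG w g Ψ = wdeg w (Ψ.eval g)
  rw [hΨC]
  exact cond_C hc

lemma mwg_zero_iff (Φ : Polynomial (MvPolynomial (Fin n) k)) (hΦ : Φ ≠ 0)
    (g : MvPolynomial (Fin n) k) (w : Fin n → Γ) :
    mwg w g Φ = 0 ↔ wdegG w g Φ = wdeg w (Φ.eval g) := by
  rw [mwg, Nat.sInf_eq_zero]
  constructor
  · rintro (h | h)
    · simpa using h
    · exact absurd (h ▸ setS_nonempty Φ hΦ g w) (Set.notMem_empty _)
  · intro h
    left
    simpa using h

end StmtAux

/-- For nonzero `Φ ∈ k[x][y]`, nonzero `g ∈ k[x]` and `w ∈ Γ^n`, the following are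
equivalent: (1) `m_w^g(Φ) = 0`; (2) `deg_w^g Φ = deg_w Φ(g)`; (3) `Φ^{w,g}(g^w) ≠ 0`;
(4) `Φ(g) ≠ 0` and `Φ(g)^w = Φ^{w,g}(g^w)`. -/
theorem stmt2 (Φ : Polynomial (MvPolynomial (Fin n) k)) (hΦ : Φ ≠ 0)
    (g : MvPolynomial (Fin n) k) (hg : g ≠ 0) (w : Fin n → Γ) :
    (mwg w g Φ = 0 ↔ wdegG w g Φ = wdeg w (Φ.eval g)) ∧
    (mwg w g Φ = 0 ↔ (pLform w g Φ).eval (lform w g) ≠ 0) ∧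
    (mwg w g Φ = 0 ↔
      (Φ.eval g ≠ 0 ∧ lform w (Φ.eval g) = (pLform w g Φ).eval (lform w g))) := by
  obtain ⟨h23, h24⟩ := StmtAux.key Φ hΦ g hg w
  have h12 := StmtAux.mwg_zero_iff Φ hΦ g w
  exact ⟨h12, h12.trans h23, h12.trans (h23.trans h24.symm)⟩
end

section
/- Let Φ ∈ k[x][y] be nonzero, g ∈ k[x] nonzero, and w ∈ Γ^n. Then m_w^g(Φ) = min{ i ≥ 0 : (∂_y^i(Φ^{w,g}))(g^w) ≠ 0 }. -/
open MvPolynomial Polynomial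

set_option synthInstance.maxHeartbeats 1000000
set_option maxHeartbeats 1000000

variable {k : Type*} [Field k] [CharZero k] {n : ℕ}
variable {Γ : Type*} [AddCommGroup Γ] [LinearOrder Γ] [IsOrderedAddMonoid Γ]

set_option linter.unusedSectionVars false

namespace Aux

noncomputable def degd (w : Fin n → Γ) (d : Fin n →₀ ℕ) : Γ := ∑ i, d i • w i

lemma degd_add (w : Fin n → Γ) (d e : Fin n →₀ ℕ) :
    degd w (d + e) = degd w d + degd w e := by
  simp [degd, add_smul, Finset.sum_add_distrib]

lemma wdeg_def (w : Fin n → Γ) (f : MvPolynomial (Fin n) k) :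
    wdeg w f = f.support.sup fun d => ((degd w d : Γ) : WithBot Γ) := rfl

lemma le_wdeg {w : Fin n → Γ} {f : MvPolynomial (Fin n) k} {d : Fin n →₀ ℕ}
    (h : d ∈ f.support) : ((degd w d : Γ) : WithBot Γ) ≤ wdeg w f :=
  Finset.le_sup (f := fun d => ((degd w d : Γ) : WithBot Γ)) h

lemma wdeg_eq_bot_iff {w : Fin n → Γ} {f : MvPolynomial (Fin n) k} :
    wdeg w f = ⊥ ↔ f = 0 := by
  rw [wdeg_def, Finset.sup_eq_bot_iff]
  constructor
  · intro h
    by_contra hf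
    obtain ⟨d, hd⟩ := (MvPolynomial.support_nonempty.2 hf)
    exact WithBot.coe_ne_bot (h d hd)
  · intro h; simp [h]

lemma exists_wdeg_eq {w : Fin n → Γ} {f : MvPolynomial (Fin n) k} (hf : f ≠ 0) :
    ∃ D : Γ, wdeg w f = (D : WithBot Γ) ∧ ∃ d ∈ f.support, degd w d = D := by
  obtain ⟨d, hd, hsup⟩ :=
    Finset.exists_mem_eq_sup f.support (MvPolynomial.support_nonempty.2 hf)
      (fun d => ((degd w d : Γ) : WithBot Γ))
  exact ⟨degd w d, hsup, d, hd, rfl⟩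

lemma coeff_lform (w : Fin n → Γ) (f : MvPolynomial (Fin n) k) (d : Fin n →₀ ℕ) :
    (lform w f).coeff d =
      if ((degd w d : Γ) : WithBot Γ) = wdeg w f then f.coeff d else 0 := by
  classical
  simp only [lform, MvPolynomial.coeff_sum, MvPolynomial.coeff_monomial]
  rw [Finset.sum_ite_eq']
  by_cases hd : d ∈ f.support
  · simp [Finset.mem_filter, hd, degd]
  · have h0 : f.coeff d = 0 := by simpa [MvPolynomial.mem_support_iff] using hd
    simp [Finset.mem_filter, hd, h0]

end Aux

namespace Aux2
open Aux

variable {w : Fin n → Γ}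

lemma mem_lform_support {f : MvPolynomial (Fin n) k} {d : Fin n →₀ ℕ} :
    d ∈ (lform w f).support ↔ d ∈ f.support ∧ ((degd w d : Γ) : WithBot Γ) = wdeg w f := by
  rw [MvPolynomial.mem_support_iff, coeff_lform, MvPolynomial.mem_support_iff]
  split <;> simp_all

lemma lform_ne_zero {f : MvPolynomial (Fin n) k} (hf : f ≠ 0) : lform w f ≠ 0 := by
  obtain ⟨D, hD, d, hd, hdd⟩ := exists_wdeg_eq (w := w) hf
  intro h
  have : d ∈ (lform w f).support := mem_lform_support.2 ⟨hd, by rw [hdd, hD]⟩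
  simp [h] at this

lemma wdeg_lt_of_support {f : MvPolynomial (Fin n) k} {D : Γ}
    (h : ∀ d ∈ f.support, ((degd w d : Γ) : WithBot Γ) < (D : WithBot Γ)) :
    wdeg w f < (D : WithBot Γ) := by
  rw [wdeg_def]
  exact Finset.sup_lt_iff (by exact WithBot.bot_lt_coe D) |>.2 h

lemma wdeg_sub_lform_lt {f : MvPolynomial (Fin n) k} {D : Γ} (hD : wdeg w f = (D : WithBot Γ)) :
    wdeg w (f - lform w f) < (D : WithBot Γ) := by
  apply wdeg_lt_of_support
  intro d hd
  rw [MvPolynomial.mem_support_iff, MvPolynomial.coeff_sub, coeff_lform] at hd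
  rcases eq_or_ne ((degd w d : Γ) : WithBot Γ) (wdeg w f) with h | h
  · simp [h] at hd
  · rw [if_neg h, sub_zero] at hd
    have := le_wdeg (w := w) (MvPolynomial.mem_support_iff.2 hd)
    rw [hD] at this h
    exact lt_of_le_of_ne this h

/-- Characterization: if `f = L + r` with `L ≠ 0` homogeneous of degree `D` and
`wdeg r < D`, then `wdeg f = D` and `lform f = L`. -/
lemma lform_eq_of {L r : MvPolynomial (Fin n) k} {D : Γ} (hL0 : L ≠ 0)
    (hH : ∀ d ∈ L.support, degd w d = D) (hr : wdeg w r < (D : WithBot Γ)) :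
    wdeg w (L + r) = (D : WithBot Γ) ∧ lform w (L + r) = L := by
  have hrc : ∀ d : Fin n →₀ ℕ, degd w d = D → r.coeff d = 0 := by
    intro d hd
    by_contra hc
    have := le_wdeg (w := w) (MvPolynomial.mem_support_iff.2 hc)
    rw [hd] at this
    exact absurd (lt_of_le_of_lt this hr) (lt_irrefl _)
  have hwd : wdeg w (L + r) = (D : WithBot Γ) := by
    apply le_antisymm
    · rw [wdeg_def]
      apply Finset.sup_le
      intro d hd
      rcases eq_or_ne (L.coeff d) 0 with h0 | h0
      · have hdr : r.coeff d ≠ 0 := by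
          intro hr0
          rw [MvPolynomial.mem_support_iff, MvPolynomial.coeff_add, h0, hr0] at hd
          simp at hd
        exact le_of_lt (lt_of_le_of_lt (le_wdeg (MvPolynomial.mem_support_iff.2 hdr)) hr)
      · rw [hH d (MvPolynomial.mem_support_iff.2 h0)]
    · obtain ⟨d, hd⟩ := MvPolynomial.support_nonempty.2 hL0
      have hdd := hH d hd
      have : (L + r).coeff d ≠ 0 := by
        rw [MvPolynomial.coeff_add, hrc d hdd, add_zero]
        exact MvPolynomial.mem_support_iff.1 hd
      have := le_wdeg (w := w) (MvPolynomial.mem_support_iff.2 this)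
      rwa [hdd] at this
  refine ⟨hwd, ?_⟩
  apply MvPolynomial.ext
  intro d
  rw [coeff_lform, hwd]
  rcases eq_or_ne ((degd w d : Γ) : WithBot Γ) ((D : Γ) : WithBot Γ) with h | h
  · rw [if_pos h, MvPolynomial.coeff_add, hrc d (WithBot.coe_injective h), add_zero]
  · rw [if_neg h]
    by_contra hc
    have hd : d ∈ L.support := MvPolynomial.mem_support_iff.2 fun h0 => hc h0.symm
    exact h (by rw [hH d hd])

lemma wdeg_eq_of_hom {L : MvPolynomial (Fin n) k} {D : Γ} (hL0 : L ≠ 0)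
    (hH : ∀ d ∈ L.support, degd w d = D) : wdeg w L = (D : WithBot Γ) := by
  have h0 : wdeg w (0 : MvPolynomial (Fin n) k) < (D : WithBot Γ) := by
    rw [wdeg_eq_bot_iff.2 rfl]; exact WithBot.bot_lt_coe D
  have := lform_eq_of (w := w) hL0 hH (r := 0) h0
  simpa using this.1

lemma wdeg_add_le (f h : MvPolynomial (Fin n) k) :
    wdeg w (f + h) ≤ max (wdeg w f) (wdeg w h) := by
  rw [wdeg_def]
  apply Finset.sup_le
  intro d hd
  rcases Finset.mem_union.1 (MvPolynomial.support_add hd) with h' | h'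
  · exact le_max_of_le_left (le_wdeg h')
  · exact le_max_of_le_right (le_wdeg h')

lemma wdeg_mul_le (f h : MvPolynomial (Fin n) k) :
    wdeg w (f * h) ≤ wdeg w f + wdeg w h := by
  classical
  rw [wdeg_def]
  apply Finset.sup_le
  intro d hd
  obtain ⟨a, ha, b, hb, rfl⟩ := Finset.mem_add.1 (MvPolynomial.support_mul f h hd)
  rw [degd_add, WithBot.coe_add]
  exact add_le_add (le_wdeg ha) (le_wdeg hb)

end Aux2

namespace Aux3
open Aux Aux2

variable {w : Fin n → Γ}

lemma wdeg_sum_le {ι : Type*} (T : Finset ι) (f : ι → MvPolynomial (Fin n) k)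
    (b : WithBot Γ) (hb : ∀ i ∈ T, wdeg w (f i) ≤ b) :
    wdeg w (∑ i ∈ T, f i) ≤ b := by
  classical
  induction T using Finset.induction_on with
  | empty => simp [wdeg_eq_bot_iff.2 rfl]
  | @insert a s hx ih =>
    rw [Finset.sum_insert hx]
    refine le_trans (wdeg_add_le _ _) (max_le (hb a (Finset.mem_insert_self a s)) ?_)
    exact ih fun i hi => hb i (Finset.mem_insert_of_mem hi)

lemma lform_hom {f : MvPolynomial (Fin n) k} {D : Γ} (hD : wdeg w f = (D : WithBot Γ)) :
    ∀ d ∈ (lform w f).support, degd w d = D := by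
  intro d hd
  have := (mem_lform_support.1 hd).2
  rw [hD] at this
  exact WithBot.coe_injective this

lemma lform_add_sub (f : MvPolynomial (Fin n) k) : f = lform w f + (f - lform w f) := by ring

lemma wdeg_mul {f h : MvPolynomial (Fin n) k} (hf : f ≠ 0) (hh : h ≠ 0) :
    wdeg w (f * h) = wdeg w f + wdeg w h ∧ lform w (f * h) = lform w f * lform w h := by
  classical
  obtain ⟨Df, hDf, _⟩ := exists_wdeg_eq (w := w) hf
  obtain ⟨Dh, hDh, _⟩ := exists_wdeg_eq (w := w) hh
  set Lf := lform w f with hLf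
  set Lh := lform w h with hLh
  have hLf0 : Lf ≠ 0 := lform_ne_zero hf
  have hLh0 : Lh ≠ 0 := lform_ne_zero hh
  have hprod : f * h = Lf * Lh + ((f - Lf) * h + Lf * (h - Lh)) := by ring
  have hH : ∀ d ∈ (Lf * Lh).support, degd w d = Df + Dh := by
    intro d hd
    obtain ⟨a, ha, b, hb, rfl⟩ := Finset.mem_add.1 (MvPolynomial.support_mul Lf Lh hd)
    rw [degd_add, lform_hom hDf a ha, lform_hom hDh b hb]
  have h1 : wdeg w ((f - Lf) * h) < ((Df + Dh : Γ) : WithBot Γ) := by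
    refine lt_of_le_of_lt (wdeg_mul_le _ _) ?_
    rw [hDh, WithBot.coe_add]
    exact WithBot.add_lt_add_right (WithBot.coe_ne_bot) (wdeg_sub_lform_lt hDf)
  have h2 : wdeg w (Lf * (h - Lh)) < ((Df + Dh : Γ) : WithBot Γ) := by
    refine lt_of_le_of_lt (wdeg_mul_le _ _) ?_
    have : wdeg w Lf = (Df : WithBot Γ) :=
      wdeg_eq_of_hom hLf0 (lform_hom hDf)
    rw [this, WithBot.coe_add]
    exact WithBot.add_lt_add_left (WithBot.coe_ne_bot) (wdeg_sub_lform_lt hDh)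
  have hr : wdeg w ((f - Lf) * h + Lf * (h - Lh)) < ((Df + Dh : Γ) : WithBot Γ) :=
    lt_of_le_of_lt (wdeg_add_le _ _) (max_lt h1 h2)
  have := lform_eq_of (w := w) (mul_ne_zero hLf0 hLh0) hH hr
  rw [← hprod] at this
  refine ⟨?_, this.2⟩
  rw [this.1, hDf, hDh, WithBot.coe_add]

lemma one_hom : ∀ d ∈ (1 : MvPolynomial (Fin n) k).support, degd w d = 0 := by
  intro d hd
  have := MvPolynomial.mem_support_iff.1 hd
  rw [MvPolynomial.coeff_one] at this
  have hd0 : d = 0 := by by_contra hc; simp [eq_comm, hc] at this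
  simp [hd0, degd]

lemma wdeg_one : wdeg w (1 : MvPolynomial (Fin n) k) = ((0 : Γ) : WithBot Γ) :=
  wdeg_eq_of_hom one_ne_zero one_hom

lemma lform_one : lform w (1 : MvPolynomial (Fin n) k) = 1 := by
  have h0 : wdeg w (0 : MvPolynomial (Fin n) k) < ((0 : Γ) : WithBot Γ) := by
    rw [wdeg_eq_bot_iff.2 rfl]; exact WithBot.bot_lt_coe _
  have := lform_eq_of (w := w) (L := (1 : MvPolynomial (Fin n) k)) (r := 0)
    one_ne_zero one_hom h0
  simpa using this.2

lemma wdeg_pow {g : MvPolynomial (Fin n) k} (hg : g ≠ 0) {D : Γ}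
    (hD : wdeg w g = (D : WithBot Γ)) (i : ℕ) :
    wdeg w (g ^ i) = ((i • D : Γ) : WithBot Γ) ∧ lform w (g ^ i) = (lform w g) ^ i := by
  induction i with
  | zero =>
    constructor
    · rw [pow_zero, wdeg_one]; simp
    · rw [pow_zero, pow_zero, lform_one]
  | succ m ih =>
    have hgm : g ^ m ≠ 0 := pow_ne_zero m hg
    rw [pow_succ, pow_succ]
    obtain ⟨h1, h2⟩ := wdeg_mul (w := w) hgm hg
    rw [h1, h2, ih.1, ih.2, hD, succ_nsmul, WithBot.coe_add]
    exact ⟨rfl, rfl⟩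

end Aux3

namespace Aux4
open Aux Aux2 Aux3

variable {w : Fin n → Γ}

lemma support_nsmul {m : ℕ} (hm : m ≠ 0) (f : MvPolynomial (Fin n) k) :
    (m • f).support = f.support := by
  ext d
  simp only [MvPolynomial.mem_support_iff, MvPolynomial.coeff_smul, smul_eq_mul]
  rw [nsmul_eq_mul]
  simp [hm]

lemma wdeg_nsmul {m : ℕ} (hm : m ≠ 0) (f : MvPolynomial (Fin n) k) :
    wdeg w (m • f) = wdeg w f := by
  rw [wdeg_def, wdeg_def, support_nsmul hm]

lemma lform_nsmul {m : ℕ} (hm : m ≠ 0) (f : MvPolynomial (Fin n) k) :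
    lform w (m • f) = m • lform w f := by
  apply MvPolynomial.ext
  intro d
  rw [coeff_lform, wdeg_nsmul hm, MvPolynomial.coeff_smul, MvPolynomial.coeff_smul,
    coeff_lform]
  split <;> simp

lemma wdeg_sum_lt {ι : Type*} {T : Finset ι} {f : ι → MvPolynomial (Fin n) k}
    {D : Γ} (hb : ∀ i ∈ T, wdeg w (f i) < (D : WithBot Γ)) :
    wdeg w (∑ i ∈ T, f i) < (D : WithBot Γ) := by
  classical
  induction T using Finset.induction_on with
  | empty => rw [Finset.sum_empty, wdeg_eq_bot_iff.2 rfl]; exact WithBot.bot_lt_coe D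
  | @insert a s hx ih =>
    rw [Finset.sum_insert hx]
    refine lt_of_le_of_lt (wdeg_add_le _ _)
      (max_lt (hb a (Finset.mem_insert_self a s)) ?_)
    exact ih fun i hi => hb i (Finset.mem_insert_of_mem hi)

lemma wdeg_sum_eq_iff {ι : Type*} {T S : Finset ι} {f : ι → MvPolynomial (Fin n) k}
    {D : Γ} (hle : ∀ i ∈ T, wdeg w (f i) ≤ (D : WithBot Γ))
    (hS : ∀ i, i ∈ S ↔ i ∈ T ∧ wdeg w (f i) = (D : WithBot Γ)) :
    (wdeg w (∑ i ∈ T, f i) = (D : WithBot Γ) ↔ (∑ i ∈ S, lform w (f i)) ≠ 0) := by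
  classical
  have hsub : S ⊆ T := fun i hi => ((hS i).1 hi).1
  set L := ∑ i ∈ S, lform w (f i) with hL
  set R := (∑ i ∈ S, (f i - lform w (f i))) + ∑ i ∈ T \ S, f i with hR
  have hsum : ∑ i ∈ T, f i = L + R := by
    rw [hL, hR, ← Finset.sum_sdiff hsub]
    abel_nf
    rw [Finset.sum_add_distrib, ← Finset.smul_sum]
    abel
  have hRlt : wdeg w R < (D : WithBot Γ) := by
    refine lt_of_le_of_lt (wdeg_add_le _ _) (max_lt ?_ ?_)
    · exact wdeg_sum_lt fun i hi => wdeg_sub_lform_lt ((hS i).1 hi).2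
    · refine wdeg_sum_lt fun i hi => ?_
      obtain ⟨hiT, hiS⟩ := Finset.mem_sdiff.1 hi
      refine lt_of_le_of_ne (hle i hiT) fun hc => hiS ((hS i).2 ⟨hiT, hc⟩)
  rcases eq_or_ne L 0 with h0 | h0
  · rw [hsum, h0, zero_add]
    constructor
    · intro h; exact absurd h (ne_of_lt hRlt)
    · intro h; exact absurd rfl h
  · have hH : ∀ d ∈ L.support, degd w d = D := by
      intro d hd
      have hc : L.coeff d ≠ 0 := MvPolynomial.mem_support_iff.1 hd
      rw [hL, MvPolynomial.coeff_sum] at hc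
      obtain ⟨i, hi, hci⟩ := Finset.exists_ne_zero_of_sum_ne_zero hc
      exact lform_hom ((hS i).1 hi).2 d (MvPolynomial.mem_support_iff.2 hci)
    have := lform_eq_of (w := w) h0 hH hRlt
    rw [← hsum] at this
    simp [this.1, h0]

end Aux4

namespace Aux5
open Aux Aux2 Aux3 Aux4

variable {w : Fin n → Γ} {g : MvPolynomial (Fin n) k}

lemma eval_eq_support_sum (Ψ : Polynomial (MvPolynomial (Fin n) k))
    (x : MvPolynomial (Fin n) k) :
    Ψ.eval x = ∑ i ∈ Ψ.support, Ψ.coeff i * x ^ i := by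
  rw [Polynomial.eval_eq_sum, Polynomial.sum_def]

lemma exists_wdegG_eq (hg : g ≠ 0) {Ψ : Polynomial (MvPolynomial (Fin n) k)}
    (hΨ : Ψ ≠ 0) : ∃ D : Γ, wdegG w g Ψ = (D : WithBot Γ) := by
  obtain ⟨i, hi, hsup⟩ := Finset.exists_mem_eq_sup Ψ.support
    (Polynomial.support_nonempty.2 hΨ) (fun i => wdeg w (Ψ.coeff i * g ^ i))
  have hne : Ψ.coeff i * g ^ i ≠ 0 :=
    mul_ne_zero (Polynomial.mem_support_iff.1 hi) (pow_ne_zero i hg)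
  obtain ⟨D, hD, -⟩ := exists_wdeg_eq (w := w) hne
  refine ⟨D, ?_⟩
  show Ψ.support.sup (fun i => wdeg w (Ψ.coeff i * g ^ i)) = (D : WithBot Γ)
  rw [hsup]; exact hD

lemma hle_wdegG (Ψ : Polynomial (MvPolynomial (Fin n) k)) :
    ∀ i ∈ Ψ.support, wdeg w (Ψ.coeff i * g ^ i) ≤ wdegG w g Ψ :=
  fun _ hi => Finset.le_sup (f := fun i => wdeg w (Ψ.coeff i * g ^ i)) hi

lemma pLform_sum_eq {Ψ : Polynomial (MvPolynomial (Fin n) k)} {S : Finset ℕ}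
    (hg : g ≠ 0)
    (hS : ∀ i, i ∈ S ↔ i ∈ Ψ.support ∧ wdeg w (Ψ.coeff i * g ^ i) = wdegG w g Ψ) :
    pLform w g Ψ = ∑ i ∈ S, Polynomial.C (lform w (Ψ.coeff i)) * Polynomial.X ^ i := by
  rw [pLform, Finset.filter_congr_decidable]
  congr 1
  ext i
  rw [Finset.mem_filter, hS i]

lemma pLform_eval {Ψ : Polynomial (MvPolynomial (Fin n) k)} {S : Finset ℕ}
    (hg : g ≠ 0)
    (hS : ∀ i, i ∈ S ↔ i ∈ Ψ.support ∧ wdeg w (Ψ.coeff i * g ^ i) = wdegG w g Ψ) :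
    (pLform w g Ψ).eval (lform w g) = ∑ i ∈ S, lform w (Ψ.coeff i * g ^ i) := by
  obtain ⟨γ, hγ, -⟩ := exists_wdeg_eq (w := w) hg
  rw [pLform_sum_eq hg hS, Polynomial.eval_finset_sum]
  refine Finset.sum_congr rfl fun i hi => ?_
  have hΨi : Ψ.coeff i ≠ 0 := Polynomial.mem_support_iff.1 ((hS i).1 hi).1
  rw [Polynomial.eval_mul, Polynomial.eval_C, Polynomial.eval_pow, Polynomial.eval_X,
    (wdeg_mul (w := w) hΨi (pow_ne_zero i hg)).2, (wdeg_pow hg hγ i).2]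

lemma key_equiv (hg : g ≠ 0) {Ψ : Polynomial (MvPolynomial (Fin n) k)} (hΨ : Ψ ≠ 0) :
    wdegG w g Ψ = wdeg w (Ψ.eval g) ↔ (pLform w g Ψ).eval (lform w g) ≠ 0 := by
  classical
  obtain ⟨D, hD⟩ := exists_wdegG_eq (w := w) hg hΨ
  set S : Finset ℕ := Ψ.support.filter
    (fun i => wdeg w (Ψ.coeff i * g ^ i) = wdegG w g Ψ) with hSdef
  have hS : ∀ i, i ∈ S ↔ i ∈ Ψ.support ∧ wdeg w (Ψ.coeff i * g ^ i) = wdegG w g Ψ := by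
    intro i; rw [hSdef, Finset.mem_filter]
  rw [pLform_eval hg hS, eval_eq_support_sum]
  rw [hD, eq_comm]
  exact wdeg_sum_eq_iff (fun i hi => hD ▸ hle_wdegG (g := g) Ψ i hi)
    (fun i => by rw [hS i, hD])

end Aux5

namespace Aux6
open Aux Aux2 Aux3 Aux4 Aux5

variable {w : Fin n → Γ} {g : MvPolynomial (Fin n) k}

lemma nsmul_ne_zero {m : ℕ} (hm : m ≠ 0) {f : MvPolynomial (Fin n) k} (hf : f ≠ 0) :
    m • f ≠ 0 := by
  intro h
  have h2 := support_nsmul hm f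
  rw [h, MvPolynomial.support_zero] at h2
  exact hf (MvPolynomial.support_eq_empty.1 h2.symm)

lemma wdeg_term_le (Φ : Polynomial (MvPolynomial (Fin n) k)) (j : ℕ) :
    wdeg w (Φ.coeff j * g ^ j) ≤ wdegG w g Φ := by
  rcases eq_or_ne (Φ.coeff j) 0 with h | h
  · rw [h, zero_mul, wdeg_eq_bot_iff.2 rfl]; exact bot_le
  · exact hle_wdegG Φ j (Polynomial.mem_support_iff.2 h)

/-- Shift identity for iterated derivatives. -/
lemma wdeg_iter_term (hg : g ≠ 0) {γ : Γ} (hγ : wdeg w g = (γ : WithBot Γ))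
    (Φ : Polynomial (MvPolynomial (Fin n) k)) (i j : ℕ) :
    wdeg w ((Polynomial.derivative^[i] Φ).coeff j * g ^ j) + ((i • γ : Γ) : WithBot Γ)
      = wdeg w (Φ.coeff (j + i) * g ^ (j + i)) := by
  rw [Polynomial.coeff_iterate_derivative]
  have hc : (j + i).descFactorial i ≠ 0 := by
    rw [Ne, Nat.descFactorial_eq_zero_iff_lt]
    omega
  rcases eq_or_ne (Φ.coeff (j + i)) 0 with h0 | h0
  · rw [h0, smul_zero, zero_mul, zero_mul, wdeg_eq_bot_iff.2 rfl, WithBot.bot_add]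
  · obtain ⟨Dφ, hDφ, -⟩ := exists_wdeg_eq (w := w) h0
    rw [smul_mul_assoc, wdeg_nsmul hc,
      (wdeg_mul (w := w) h0 (pow_ne_zero j hg)).1,
      (wdeg_mul (w := w) h0 (pow_ne_zero (j + i) hg)).1,
      (wdeg_pow hg hγ j).1, (wdeg_pow hg hγ (j + i)).1, hDφ,
      ← WithBot.coe_add, ← WithBot.coe_add, ← WithBot.coe_add]
    rw [add_nsmul, add_assoc]

lemma cancel_coe {a b : WithBot Γ} (c : Γ) :
    a + (c : WithBot Γ) = b + (c : WithBot Γ) ↔ a = b :=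
  WithBot.add_right_inj (WithBot.coe_ne_bot)

lemma le_cancel_coe {a b : WithBot Γ} (c : Γ) :
    a + (c : WithBot Γ) ≤ b + (c : WithBot Γ) ↔ a ≤ b :=
  WithBot.add_le_add_iff_right (WithBot.coe_ne_bot)

end Aux6

namespace Aux7
open Aux Aux2 Aux3 Aux4 Aux5 Aux6

variable {w : Fin n → Γ} {g : MvPolynomial (Fin n) k}

lemma coeff_pLform (hg : g ≠ 0) {Ψ : Polynomial (MvPolynomial (Fin n) k)} (hΨ : Ψ ≠ 0)
    (j : ℕ) :
    (pLform w g Ψ).coeff j =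
      if wdeg w (Ψ.coeff j * g ^ j) = wdegG w g Ψ then lform w (Ψ.coeff j) else 0 := by
  classical
  set S : Finset ℕ := Ψ.support.filter
    (fun i => wdeg w (Ψ.coeff i * g ^ i) = wdegG w g Ψ) with hSdef
  have hS : ∀ i, i ∈ S ↔ i ∈ Ψ.support ∧ wdeg w (Ψ.coeff i * g ^ i) = wdegG w g Ψ := by
    intro i; rw [hSdef, Finset.mem_filter]
  rw [pLform_sum_eq hg hS, Polynomial.finset_sum_coeff]
  simp_rw [Polynomial.coeff_C_mul, Polynomial.coeff_X_pow, mul_ite, mul_one, mul_zero]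
  rw [Finset.sum_ite_eq]
  obtain ⟨D, hD⟩ := exists_wdegG_eq (w := w) hg hΨ
  by_cases hc : wdeg w (Ψ.coeff j * g ^ j) = wdegG w g Ψ
  · have hj : j ∈ Ψ.support := by
      rw [Polynomial.mem_support_iff]
      intro h0
      rw [h0, zero_mul, wdeg_eq_bot_iff.2 rfl, hD] at hc
      exact WithBot.bot_ne_coe hc
    rw [if_pos ((hS j).2 ⟨hj, hc⟩), if_pos hc]
  · rw [if_neg hc, if_neg (fun h => hc ((hS j).1 h).2)]

end Aux7

namespace Aux8
open Aux Aux2 Aux3 Aux4 Aux5 Aux6 Aux7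

variable {w : Fin n → Γ} {g : MvPolynomial (Fin n) k}
variable {Φ : Polynomial (MvPolynomial (Fin n) k)} {γ D : Γ} {M : ℕ}

lemma iter_coeff_ne_zero {i : ℕ} (hi : i ≤ M) (hM2 : Φ.coeff M ≠ 0) :
    (Polynomial.derivative^[i] Φ).coeff (M - i) ≠ 0 := by
  rw [Polynomial.coeff_iterate_derivative, Nat.sub_add_cancel hi]
  have hc : M.descFactorial i ≠ 0 := by
    rw [Ne, Nat.descFactorial_eq_zero_iff_lt]; omega
  exact nsmul_ne_zero hc hM2

lemma iter_ne_zero {i : ℕ} (hi : i ≤ M) (hM2 : Φ.coeff M ≠ 0) :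
    Polynomial.derivative^[i] Φ ≠ 0 := by
  intro h0
  apply iter_coeff_ne_zero hi hM2
  rw [h0, Polynomial.coeff_zero]

lemma wdegG_iter (hg : g ≠ 0) (hγ : wdeg w g = (γ : WithBot Γ))
    (hD : wdegG w g Φ = (D : WithBot Γ))
    (hM1 : wdeg w (Φ.coeff M * g ^ M) = (D : WithBot Γ)) (hM2 : Φ.coeff M ≠ 0)
    {i : ℕ} (hi : i ≤ M) :
    wdegG w g (Polynomial.derivative^[i] Φ) = ((D - i • γ : Γ) : WithBot Γ) := by
  apply le_antisymm
  · apply Finset.sup_le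
    intro j hj
    rw [← le_cancel_coe (i • γ), wdeg_iter_term hg hγ Φ i j, ← WithBot.coe_add,
      sub_add_cancel]
    exact hD ▸ wdeg_term_le Φ (j + i)
  · have key := wdeg_iter_term hg hγ Φ i (M - i)
    rw [Nat.sub_add_cancel hi, hM1] at key
    have hval : wdeg w ((Polynomial.derivative^[i] Φ).coeff (M - i) * g ^ (M - i))
        = ((D - i • γ : Γ) : WithBot Γ) := by
      rw [← cancel_coe (i • γ), key, ← WithBot.coe_add, sub_add_cancel]
    have hmem : (M - i) ∈ (Polynomial.derivative^[i] Φ).support :=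
      Polynomial.mem_support_iff.2 (iter_coeff_ne_zero hi hM2)
    calc ((D - i • γ : Γ) : WithBot Γ) = _ := hval.symm
      _ ≤ _ := Finset.le_sup
          (f := fun j => wdeg w ((Polynomial.derivative^[i] Φ).coeff j * g ^ j)) hmem

lemma pLform_iter (hg : g ≠ 0) (hγ : wdeg w g = (γ : WithBot Γ))
    (hΦ : Φ ≠ 0) (hD : wdegG w g Φ = (D : WithBot Γ))
    (hM1 : wdeg w (Φ.coeff M * g ^ M) = (D : WithBot Γ)) (hM2 : Φ.coeff M ≠ 0)
    {i : ℕ} (hi : i ≤ M) :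
    pLform w g (Polynomial.derivative^[i] Φ)
      = Polynomial.derivative^[i] (pLform w g Φ) := by
  apply Polynomial.ext
  intro j
  have hrhs : (Polynomial.derivative^[i] (pLform w g Φ)).coeff j
      = (j + i).descFactorial i • (pLform w g Φ).coeff (j + i) :=
    Polynomial.coeff_iterate_derivative (pLform w g Φ) j
  rw [coeff_pLform hg (iter_ne_zero hi hM2) j, hrhs,
    coeff_pLform hg hΦ (j + i), wdegG_iter hg hγ hD hM1 hM2 hi, hD]
  have hcond : (wdeg w ((Polynomial.derivative^[i] Φ).coeff j * g ^ j)
        = ((D - i • γ : Γ) : WithBot Γ))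
      ↔ wdeg w (Φ.coeff (j + i) * g ^ (j + i)) = ((D : Γ) : WithBot Γ) := by
    rw [← cancel_coe (i • γ), wdeg_iter_term hg hγ Φ i j, ← WithBot.coe_add,
      sub_add_cancel]
  by_cases hc : wdeg w (Φ.coeff (j + i) * g ^ (j + i)) = ((D : Γ) : WithBot Γ)
  · rw [if_pos (hcond.2 hc), if_pos hc, Polynomial.coeff_iterate_derivative]
    have hdc : (j + i).descFactorial i ≠ 0 := by
      rw [Ne, Nat.descFactorial_eq_zero_iff_lt]; omega
    rw [lform_nsmul hdc]
  · rw [if_neg (fun h => hc (hcond.1 h)), if_neg hc, smul_zero]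

lemma M_mem (hg : g ≠ 0) (hγ : wdeg w g = (γ : WithBot Γ))
    (hD : wdegG w g Φ = (D : WithBot Γ))
    (hM1 : wdeg w (Φ.coeff M * g ^ M) = (D : WithBot Γ)) (hM2 : Φ.coeff M ≠ 0)
    (hSmax : ∀ j, Φ.coeff j ≠ 0 → wdeg w (Φ.coeff j * g ^ j) = (D : WithBot Γ) → j ≤ M) :
    wdegG w g (Polynomial.derivative^[M] Φ)
      = wdeg w ((Polynomial.derivative^[M] Φ).eval g) := by
  classical
  set Ψ := Polynomial.derivative^[M] Φ with hΨdef
  have hwG : wdegG w g Ψ = ((D - M • γ : Γ) : WithBot Γ) :=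
    wdegG_iter hg hγ hD hM1 hM2 le_rfl
  have hΨ0 : Ψ.coeff 0 ≠ 0 := by
    have := iter_coeff_ne_zero (M := M) le_rfl hM2
    simpa using this
  have hcond : ∀ j, (wdeg w (Ψ.coeff j * g ^ j) = ((D - M • γ : Γ) : WithBot Γ))
      ↔ wdeg w (Φ.coeff (j + M) * g ^ (j + M)) = ((D : Γ) : WithBot Γ) := by
    intro j
    rw [← cancel_coe (M • γ), hΨdef, wdeg_iter_term hg hγ Φ M j, ← WithBot.coe_add,
      sub_add_cancel]
  have hS : ∀ j, j ∈ ({0} : Finset ℕ) ↔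
      j ∈ Ψ.support ∧ wdeg w (Ψ.coeff j * g ^ j) = ((D - M • γ : Γ) : WithBot Γ) := by
    intro j
    rw [Finset.mem_singleton]
    constructor
    · rintro rfl
      refine ⟨Polynomial.mem_support_iff.2 hΨ0, (hcond 0).2 ?_⟩
      simpa using hM1
    · rintro ⟨hmem, hval⟩
      have h1 := (hcond j).1 hval
      have h2 : Φ.coeff (j + M) ≠ 0 := by
        intro h0
        rw [h0, zero_mul, wdeg_eq_bot_iff.2 rfl] at h1
        exact WithBot.bot_ne_coe h1
      have := hSmax (j + M) h2 h1
      omega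
  rw [hwG, eval_eq_support_sum, eq_comm]
  rw [wdeg_sum_eq_iff (fun j hj => hwG ▸ hle_wdegG (g := g) Ψ j hj) hS,
    Finset.sum_singleton]
  exact lform_ne_zero (mul_ne_zero hΨ0 (pow_ne_zero 0 hg))

end Aux8

/-- For nonzero `Φ ∈ k[x][y]`, nonzero `g ∈ k[x]` and `w ∈ Γ^n`:
`m_w^g(Φ) = min { i ≥ 0 : (∂_y^i (Φ^{w,g}))(g^w) ≠ 0 }`. -/
theorem stmt3 (Φ : Polynomial (MvPolynomial (Fin n) k)) (hΦ : Φ ≠ 0)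
    (g : MvPolynomial (Fin n) k) (hg : g ≠ 0) (w : Fin n → Γ) :
    mwg w g Φ =
      sInf {i : ℕ | (Polynomial.derivative^[i] (pLform w g Φ)).eval (lform w g) ≠ 0} := by
  classical
  obtain ⟨D, hD⟩ := Aux5.exists_wdegG_eq (w := w) hg hΦ
  obtain ⟨γ, hγ, -⟩ := Aux.exists_wdeg_eq (w := w) hg
  have hGdef : wdegG w g Φ = Φ.support.sup (fun i => wdeg w (Φ.coeff i * g ^ i)) := rfl
  set S : Finset ℕ := Φ.support.filter
    (fun i => wdeg w (Φ.coeff i * g ^ i) = wdegG w g Φ) with hSdef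
  have hSne : S.Nonempty := by
    obtain ⟨i, hi, hsup⟩ := Finset.exists_mem_eq_sup Φ.support
      (Polynomial.support_nonempty.2 hΦ) (fun i => wdeg w (Φ.coeff i * g ^ i))
    exact ⟨i, Finset.mem_filter.2 ⟨hi, by rw [hGdef, hsup]⟩⟩
  set M := S.max' hSne with hMdef
  have hMS : M ∈ S := S.max'_mem hSne
  have hM' := Finset.mem_filter.1 hMS
  have hM2 : Φ.coeff M ≠ 0 := Polynomial.mem_support_iff.1 hM'.1
  have hM1 : wdeg w (Φ.coeff M * g ^ M) = (D : WithBot Γ) := by rw [hM'.2, hD]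
  have hSmax : ∀ j, Φ.coeff j ≠ 0 → wdeg w (Φ.coeff j * g ^ j) = (D : WithBot Γ)
      → j ≤ M := by
    intro j h1 h2
    exact Finset.le_max' S j (Finset.mem_filter.2
      ⟨Polynomial.mem_support_iff.2 h1, by rw [h2, hD]⟩)
  have hequiv : ∀ i ≤ M,
      ((wdegG w g (Polynomial.derivative^[i] Φ)
          = wdeg w ((Polynomial.derivative^[i] Φ).eval g))
        ↔ (Polynomial.derivative^[i] (pLform w g Φ)).eval (lform w g) ≠ 0) := by
    intro i hi
    rw [← Aux8.pLform_iter hg hγ hΦ hD hM1 hM2 hi]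
    exact Aux5.key_equiv hg (Aux8.iter_ne_zero hi hM2)
  have hMA : wdegG w g (Polynomial.derivative^[M] Φ)
      = wdeg w ((Polynomial.derivative^[M] Φ).eval g) :=
    Aux8.M_mem hg hγ hD hM1 hM2 hSmax
  have hMB := (hequiv M le_rfl).1 hMA
  have hmwg : mwg w g Φ = sInf {i : ℕ |
      wdegG w g (Polynomial.derivative^[i] Φ)
        = wdeg w ((Polynomial.derivative^[i] Φ).eval g)} := rfl
  rw [hmwg]
  apply le_antisymm
  · have hb : sInf {i : ℕ | (Polynomial.derivative^[i] (pLform w g Φ)).eval (lform w g) ≠ 0}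
        ∈ {i : ℕ | (Polynomial.derivative^[i] (pLform w g Φ)).eval (lform w g) ≠ 0} :=
      Nat.sInf_mem ⟨M, hMB⟩
    have hbM : sInf {i : ℕ | (Polynomial.derivative^[i] (pLform w g Φ)).eval (lform w g) ≠ 0}
        ≤ M := Nat.sInf_le hMB
    exact Nat.sInf_le ((hequiv _ hbM).2 hb)
  · have ha : sInf {i : ℕ | wdegG w g (Polynomial.derivative^[i] Φ)
          = wdeg w ((Polynomial.derivative^[i] Φ).eval g)}
        ∈ {i : ℕ | wdegG w g (Polynomial.derivative^[i] Φ)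
          = wdeg w ((Polynomial.derivative^[i] Φ).eval g)} :=
      Nat.sInf_mem ⟨M, hMA⟩
    have haM : sInf {i : ℕ | wdegG w g (Polynomial.derivative^[i] Φ)
          = wdeg w ((Polynomial.derivative^[i] Φ).eval g)} ≤ M := Nat.sInf_le hMA
    exact Nat.sInf_le ((hequiv _ haM).1 ha)
end

section
/- Let A be a k-subalgebra of k[x] with field of fractions K, let Φ ∈ A[y] be nonzero, g ∈ k[x] nonzero, and w ∈ Γ^n. If g^w is transcendental over K^w, then m_w^g(Φ) = 0 and deg_w Φ(g) = deg_w^g Φ. -/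
open MvPolynomial Polynomial

set_option synthInstance.maxHeartbeats 1000000
set_option maxHeartbeats 1000000

variable {k : Type*} [Field k] [CharZero k] {n : ℕ}
variable {Γ : Type*} [AddCommGroup Γ] [LinearOrder Γ] [IsOrderedAddMonoid Γ]

-- aux
abbrev dd (w : Fin n → Γ) (d : Fin n →₀ ℕ) : Γ := ∑ i, d i • w i

lemma dd_add (w : Fin n → Γ) (a b : Fin n →₀ ℕ) : dd w (a + b) = dd w a + dd w b := by
  simp [dd, Finsupp.add_apply, add_smul, Finset.sum_add_distrib]

lemma le_wdeg (w : Fin n → Γ) {f : MvPolynomial (Fin n) k} {d : Fin n →₀ ℕ}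
    (hd : d ∈ f.support) : ((dd w d : Γ) : WithBot Γ) ≤ wdeg w f :=
  Finset.le_sup (f := fun d => ((dd w d : Γ) : WithBot Γ)) hd

lemma wdeg_zero (w : Fin n → Γ) : wdeg w (0 : MvPolynomial (Fin n) k) = ⊥ := by
  simp [wdeg]

lemma wdeg_ne_bot (w : Fin n → Γ) {f : MvPolynomial (Fin n) k} (hf : f ≠ 0) :
    wdeg w f ≠ ⊥ := by
  obtain ⟨d, hd⟩ := MvPolynomial.support_nonempty.2 hf
  intro h
  have := le_wdeg w hd
  rw [h, le_bot_iff] at this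
  exact WithBot.coe_ne_bot this

lemma coeff_lform (w : Fin n → Γ) (f : MvPolynomial (Fin n) k) (d : Fin n →₀ ℕ) :
    (lform w f).coeff d =
      if ((dd w d : Γ) : WithBot Γ) = wdeg w f then f.coeff d else 0 := by
  classical
  simp only [lform, MvPolynomial.coeff_sum, MvPolynomial.coeff_monomial,
    Finset.filter_congr_decidable, Finset.sum_ite_eq', Finset.mem_filter,
    MvPolynomial.mem_support_iff, dd]
  split_ifs with h1 h2 h3
  · rfl
  · exact absurd h1.2 h2
  · by_contra hne
    exact h1 ⟨fun h0 => hne h0.symm, h3⟩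
  · rfl

lemma wdeg_def (w : Fin n → Γ) (f : MvPolynomial (Fin n) k) :
    wdeg w f = f.support.sup fun d => ((dd w d : Γ) : WithBot Γ) := rfl

lemma lform_ne_zero (w : Fin n → Γ) {f : MvPolynomial (Fin n) k} (hf : f ≠ 0) :
    lform w f ≠ 0 := by
  obtain ⟨d, hd, hsup⟩ := Finset.exists_mem_eq_sup f.support
    (MvPolynomial.support_nonempty.2 hf) (fun d => ((dd w d : Γ) : WithBot Γ))
  rw [← wdeg_def] at hsup
  intro h0
  have : (lform w f).coeff d = f.coeff d := by
    rw [coeff_lform, if_pos hsup.symm]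
  rw [h0, MvPolynomial.coeff_zero] at this
  exact MvPolynomial.mem_support_iff.1 hd this.symm

/-- `f` is `w`-homogeneous of degree `γ` (or zero). -/
def Hw (w : Fin n → Γ) (γ : Γ) (f : MvPolynomial (Fin n) k) : Prop :=
  ∀ d ∈ f.support, dd w d = γ

lemma hw_zero (w : Fin n → Γ) (γ : Γ) : Hw w γ (0 : MvPolynomial (Fin n) k) := by
  intro d hd; simp at hd

lemma hw_add {w : Fin n → Γ} {γ : Γ} {a b : MvPolynomial (Fin n) k}
    (ha : Hw w γ a) (hb : Hw w γ b) : Hw w γ (a + b) := by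
  classical
  intro d hd
  rcases Finset.mem_union.1 (MvPolynomial.support_add hd) with h | h
  exacts [ha d h, hb d h]

lemma hw_sum {w : Fin n → Γ} {γ : Γ} {s : Finset ℕ} {F : ℕ → MvPolynomial (Fin n) k}
    (h : ∀ i ∈ s, Hw w γ (F i)) : Hw w γ (∑ i ∈ s, F i) := by
  induction s using Finset.cons_induction with
  | empty => simpa using hw_zero w γ
  | cons i s his ih =>
    rw [Finset.sum_cons]
    exact hw_add (h i (Finset.mem_cons_self _ _)) (ih fun j hj => h j (Finset.mem_cons_of_mem hj))

lemma hw_mul {w : Fin n → Γ} {γ δ : Γ} {a b : MvPolynomial (Fin n) k}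
    (ha : Hw w γ a) (hb : Hw w δ b) : Hw w (γ + δ) (a * b) := by
  classical
  intro d hd
  obtain ⟨x, hx, y, hy, rfl⟩ := Finset.mem_add.1 (MvPolynomial.support_mul a b hd)
  rw [dd_add, ha x hx, hb y hy]

lemma wdeg_of_hw {w : Fin n → Γ} {γ : Γ} {f : MvPolynomial (Fin n) k}
    (h : Hw w γ f) (hf : f ≠ 0) : wdeg w f = (γ : WithBot Γ) := by
  apply le_antisymm
  · exact Finset.sup_le fun d hd => by rw [show (∑ i, d i • w i : Γ) = dd w d from rfl, h d hd]
  · obtain ⟨d, hd⟩ := MvPolynomial.support_nonempty.2 hf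
    calc (γ : WithBot Γ) = ((dd w d : Γ) : WithBot Γ) := by rw [h d hd]
      _ ≤ wdeg w f := le_wdeg w hd

lemma hw_lform {w : Fin n → Γ} {γ : Γ} {f : MvPolynomial (Fin n) k}
    (h : wdeg w f = (γ : WithBot Γ)) : Hw w γ (lform w f) := by
  intro d hd
  have hc := MvPolynomial.mem_support_iff.1 hd
  rw [coeff_lform] at hc
  by_cases h2 : ((dd w d : Γ) : WithBot Γ) = wdeg w f
  · rw [h] at h2; exact_mod_cast h2
  · rw [if_neg h2] at hc; exact absurd rfl hc

lemma wdeg_add_le (w : Fin n → Γ) (a b : MvPolynomial (Fin n) k) :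
    wdeg w (a + b) ≤ max (wdeg w a) (wdeg w b) := by
  classical
  apply Finset.sup_le
  intro d hd
  rcases Finset.mem_union.1 (MvPolynomial.support_add hd) with h | h
  · exact le_trans (le_wdeg w h) (le_max_left _ _)
  · exact le_trans (le_wdeg w h) (le_max_right _ _)

lemma wdeg_add_lt {w : Fin n → Γ} {a b : MvPolynomial (Fin n) k} {c : WithBot Γ}
    (ha : wdeg w a < c) (hb : wdeg w b < c) : wdeg w (a + b) < c :=
  lt_of_le_of_lt (wdeg_add_le w a b) (max_lt ha hb)

lemma wdeg_sum_lt {w : Fin n → Γ} {s : Finset ℕ} {F : ℕ → MvPolynomial (Fin n) k}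
    {c : WithBot Γ} (hc : ⊥ < c) (h : ∀ i ∈ s, wdeg w (F i) < c) :
    wdeg w (∑ i ∈ s, F i) < c := by
  induction s using Finset.cons_induction with
  | empty => simpa [wdeg_zero] using hc
  | cons i s his ih =>
    rw [Finset.sum_cons]
    exact wdeg_add_lt (h i (Finset.mem_cons_self _ _))
      (ih fun j hj => h j (Finset.mem_cons_of_mem hj))

lemma wdeg_mul_le (w : Fin n → Γ) (a b : MvPolynomial (Fin n) k) :
    wdeg w (a * b) ≤ wdeg w a + wdeg w b := by
  classical
  apply Finset.sup_le
  intro d hd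
  obtain ⟨x, hx, y, hy, rfl⟩ := Finset.mem_add.1 (MvPolynomial.support_mul a b hd)
  calc ((dd w (x + y) : Γ) : WithBot Γ) = ((dd w x : Γ) : WithBot Γ) + ((dd w y : Γ) : WithBot Γ) := by
        rw [dd_add]; exact WithBot.coe_add _ _
    _ ≤ wdeg w a + wdeg w b := add_le_add (le_wdeg w hx) (le_wdeg w hy)

lemma wdeg_sub_lform (w : Fin n → Γ) {f : MvPolynomial (Fin n) k} (hf : f ≠ 0) :
    wdeg w (f - lform w f) < wdeg w f := by
  rw [show wdeg w (f - lform w f) = (f - lform w f).support.sup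
    (fun d => ((dd w d : Γ) : WithBot Γ)) from rfl]
  rw [Finset.sup_lt_iff (bot_lt_iff_ne_bot.2 (wdeg_ne_bot w hf))]
  intro d hd
  have hc : (f - lform w f).coeff d ≠ 0 := MvPolynomial.mem_support_iff.1 hd
  rw [MvPolynomial.coeff_sub, coeff_lform] at hc
  by_cases h : ((dd w d : Γ) : WithBot Γ) = wdeg w f
  · rw [if_pos h, sub_self] at hc; exact absurd rfl hc
  · rw [if_neg h, sub_zero] at hc
    exact lt_of_le_of_ne (le_wdeg w (MvPolynomial.mem_support_iff.2 hc)) h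

lemma lform_decomp {w : Fin n → Γ} {γ : Γ} (P r : MvPolynomial (Fin n) k)
    (hP : Hw w γ P) (hP0 : P ≠ 0) (hr : wdeg w r < (γ : WithBot Γ)) :
    wdeg w (P + r) = (γ : WithBot Γ) ∧ lform w (P + r) = P := by
  have hrcoeff : ∀ d : Fin n →₀ ℕ, dd w d = γ → r.coeff d = 0 := by
    intro d hdd
    by_contra hne
    have h1 := le_wdeg w (MvPolynomial.mem_support_iff.2 hne)
    rw [hdd] at h1
    exact absurd (lt_of_le_of_lt h1 hr) (lt_irrefl _)
  have h1 : wdeg w (P + r) = (γ : WithBot Γ) := by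
    apply le_antisymm
    · exact le_trans (wdeg_add_le w P r) (max_le (wdeg_of_hw hP hP0).le hr.le)
    · obtain ⟨d, hd⟩ := MvPolynomial.support_nonempty.2 hP0
      have hdd := hP d hd
      have hcd : (P + r).coeff d ≠ 0 := by
        rw [MvPolynomial.coeff_add, hrcoeff d hdd, add_zero]
        exact MvPolynomial.mem_support_iff.1 hd
      calc (γ : WithBot Γ) = ((dd w d : Γ) : WithBot Γ) := by rw [hdd]
        _ ≤ wdeg w (P + r) := le_wdeg w (MvPolynomial.mem_support_iff.2 hcd)
  refine ⟨h1, ?_⟩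
  ext d
  rw [coeff_lform, h1]
  by_cases hdd : ((dd w d : Γ) : WithBot Γ) = (γ : WithBot Γ)
  · rw [if_pos hdd, MvPolynomial.coeff_add, hrcoeff d (by exact_mod_cast hdd), add_zero]
  · rw [if_neg hdd]
    by_contra hne
    exact hdd (by rw [hP d (MvPolynomial.mem_support_iff.2 fun h0 => hne h0.symm)])

lemma lform_mul (w : Fin n → Γ) {f h : MvPolynomial (Fin n) k} (hf : f ≠ 0) (hh : h ≠ 0) :
    lform w (f * h) = lform w f * lform w h ∧ wdeg w (f * h) = wdeg w f + wdeg w h := by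
  obtain ⟨γ, hγ⟩ := WithBot.ne_bot_iff_exists.1 (wdeg_ne_bot w hf)
  obtain ⟨δ, hδ⟩ := WithBot.ne_bot_iff_exists.1 (wdeg_ne_bot w hh)
  have hF : Hw w γ (lform w f) := hw_lform hγ.symm
  have hH : Hw w δ (lform w h) := hw_lform hδ.symm
  have hF0 := lform_ne_zero w hf
  have hH0 := lform_ne_zero w hh
  have key : f * h = lform w f * lform w h +
      (lform w f * (h - lform w h) + (f - lform w f) * h) := by ring
  have hr : wdeg w (lform w f * (h - lform w h) + (f - lform w f) * h)
      < ((γ + δ : Γ) : WithBot Γ) := by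
    apply wdeg_add_lt
    · calc wdeg w (lform w f * (h - lform w h))
          ≤ wdeg w (lform w f) + wdeg w (h - lform w h) := wdeg_mul_le w _ _
        _ = (γ : WithBot Γ) + wdeg w (h - lform w h) := by rw [wdeg_of_hw hF hF0]
        _ < (γ : WithBot Γ) + (δ : WithBot Γ) :=
            WithBot.add_lt_add_left WithBot.coe_ne_bot (by rw [hδ]; exact wdeg_sub_lform w hh)
        _ = ((γ + δ : Γ) : WithBot Γ) := (WithBot.coe_add _ _).symm
    · calc wdeg w ((f - lform w f) * h)
          ≤ wdeg w (f - lform w f) + wdeg w h := wdeg_mul_le w _ _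
        _ = wdeg w (f - lform w f) + (δ : WithBot Γ) := by rw [hδ]
        _ < (γ : WithBot Γ) + (δ : WithBot Γ) :=
            WithBot.add_lt_add_right WithBot.coe_ne_bot (by rw [hγ]; exact wdeg_sub_lform w hf)
        _ = ((γ + δ : Γ) : WithBot Γ) := (WithBot.coe_add _ _).symm
  have hdec := lform_decomp (lform w f * lform w h) _ (hw_mul hF hH) (mul_ne_zero hF0 hH0) hr
  rw [← key] at hdec
  refine ⟨hdec.2, ?_⟩
  rw [hdec.1, ← hγ, ← hδ, ← WithBot.coe_add]

lemma lform_one (w : Fin n → Γ) : lform w (1 : MvPolynomial (Fin n) k) = 1 := by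
  have hw1 : Hw w 0 (1 : MvPolynomial (Fin n) k) := by
    intro d hd
    have hc := MvPolynomial.mem_support_iff.1 hd
    rw [MvPolynomial.coeff_one] at hc
    by_cases h : (0 : Fin n →₀ ℕ) = d
    · rw [← h]; simp [dd]
    · rw [if_neg h] at hc; exact absurd rfl hc
  have := lform_decomp (1 : MvPolynomial (Fin n) k) 0 hw1 one_ne_zero
    (by rw [wdeg_zero]; exact bot_lt_iff_ne_bot.2 WithBot.coe_ne_bot)
  simpa using this.2

lemma lform_pow (w : Fin n → Γ) {g : MvPolynomial (Fin n) k} (hg : g ≠ 0) (i : ℕ) :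
    lform w (g ^ i) = (lform w g) ^ i := by
  induction i with
  | zero => simpa using lform_one w
  | succ m ih =>
    rw [pow_succ, pow_succ, ← ih]
    exact (lform_mul w (pow_ne_zero m hg) hg).1


/-- If `A` is a `k`-subalgebra of `k[x]`, `Φ ∈ A[y]` nonzero, `g ∈ k[x]` nonzero, and
`g^w` is transcendental over `K^w` (the fraction field of `A^w`), then `m_w^g(Φ) = 0`
and `deg_w Φ(g) = deg_w^g Φ`. -/
theorem stmt4 (A : Subalgebra k (MvPolynomial (Fin n) k))
    (Φ : Polynomial (MvPolynomial (Fin n) k)) (hΦ : Φ ≠ 0) (hΦA : ∀ i, Φ.coeff i ∈ A)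
    (g : MvPolynomial (Fin n) k) (hg : g ≠ 0) (w : Fin n → Γ)
    (htr : Transcendental (KW w A)
      (algebraMap (MvPolynomial (Fin n) k) (FractionRing (MvPolynomial (Fin n) k))
        (lform w g))) :
    mwg w g Φ = 0 ∧ wdeg w (Φ.eval g) = wdegG w g Φ := by
  classical
  set L := FractionRing (MvPolynomial (Fin n) k) with hL
  set ι := algebraMap (MvPolynomial (Fin n) k) L with hι
  have hιinj : Function.Injective ι := IsFractionRing.injective (MvPolynomial (Fin n) k) L
  -- the top index set
  set S : Finset ℕ := Φ.support.filter
    (fun i => wdeg w (Φ.coeff i * g ^ i) = wdegG w g Φ) with hS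
  obtain ⟨i₀, hi₀, hDi₀⟩ := Finset.exists_mem_eq_sup Φ.support
    (Polynomial.support_nonempty.2 hΦ) (fun i => wdeg w (Φ.coeff i * g ^ i))
  have hDi₀' : wdegG w g Φ = wdeg w (Φ.coeff i₀ * g ^ i₀) := hDi₀
  have hi₀S : i₀ ∈ S := Finset.mem_filter.2 ⟨hi₀, hDi₀'.symm⟩
  have hφ₀ : Φ.coeff i₀ ≠ 0 := Polynomial.mem_support_iff.1 hi₀
  have hDne : wdegG w g Φ ≠ ⊥ := by
    rw [hDi₀']
    exact wdeg_ne_bot w (mul_ne_zero hφ₀ (pow_ne_zero _ hg))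
  obtain ⟨δ, hδ⟩ := WithBot.ne_bot_iff_exists.1 hDne
  -- coefficients in S are nonzero
  have hSne : ∀ i ∈ S, Φ.coeff i ≠ 0 := fun i hi =>
    Polynomial.mem_support_iff.1 (Finset.mem_filter.1 hi).1
  have hSdeg : ∀ i ∈ S, wdeg w (Φ.coeff i * g ^ i) = (δ : WithBot Γ) := fun i hi => by
    rw [(Finset.mem_filter.1 hi).2, ← hδ]
  -- leading forms multiply
  have hlf : ∀ i ∈ S, lform w (Φ.coeff i * g ^ i) =
      lform w (Φ.coeff i) * (lform w g) ^ i := fun i hi => by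
    rw [(lform_mul w (hSne i hi) (pow_ne_zero i hg)).1, lform_pow w hg]
  -- the top form T
  set T : MvPolynomial (Fin n) k := ∑ i ∈ S, lform w (Φ.coeff i) * (lform w g) ^ i with hT
  have hTalt : T = ∑ i ∈ S, lform w (Φ.coeff i * g ^ i) :=
    (Finset.sum_congr rfl fun i hi => (hlf i hi).symm)
  have hHwT : Hw w δ T := by
    rw [hTalt]
    exact hw_sum fun i hi => hw_lform (hSdeg i hi)
  -- transcendence: T ≠ 0
  have hmem : ∀ i ∈ S, ι (lform w (Φ.coeff i)) ∈ KW w A := by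
    intro i hi
    apply Subfield.subset_closure
    exact ⟨lform w (Φ.coeff i),
      Algebra.subset_adjoin ⟨Φ.coeff i, ⟨hΦA i, by simp [hSne i hi]⟩, rfl⟩, rfl⟩
  have hT0 : T ≠ 0 := by
    intro hT0
    set c : ℕ → KW w A := fun i =>
      if h : i ∈ S then ⟨ι (lform w (Φ.coeff i)), hmem i h⟩ else 0 with hc
    set p : Polynomial (KW w A) := ∑ i ∈ S, Polynomial.C (c i) * Polynomial.X ^ i with hp
    have hpcoeff : p.coeff i₀ = c i₀ := by
      rw [hp, Polynomial.finset_sum_coeff]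
      simp only [Polynomial.coeff_C_mul, Polynomial.coeff_X_pow, mul_ite, mul_one, mul_zero]
      rw [Finset.sum_eq_single i₀ (fun i _ hne => if_neg (fun h => hne h.symm))
        (fun h => absurd hi₀S h), if_pos rfl]
    have hp0 : p ≠ 0 := by
      intro h0
      rw [h0, Polynomial.coeff_zero] at hpcoeff
      have : (c i₀ : L) = 0 := by rw [← hpcoeff]; rfl
      rw [hc] at this
      simp only [dif_pos hi₀S] at this
      exact lform_ne_zero w hφ₀ (hιinj (by simpa using this))
    have heval : Polynomial.aeval (ι (lform w g)) p = 0 := by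
      rw [hp, map_sum]
      have : ∀ i ∈ S, Polynomial.aeval (ι (lform w g)) (Polynomial.C (c i) * Polynomial.X ^ i)
          = ι (lform w (Φ.coeff i) * (lform w g) ^ i) := by
        intro i hi
        rw [map_mul, map_pow, Polynomial.aeval_C, Polynomial.aeval_X, map_mul, map_pow]
        congr 1
        rw [hc]
        simp only [dif_pos hi]
        rfl
      rw [Finset.sum_congr rfl this, ← map_sum, ← hT, hT0, map_zero]
    exact htr ⟨p, hp0, heval⟩
  -- the remainder
  have hwdegT : wdeg w T = (δ : WithBot Γ) := wdeg_of_hw hHwT hT0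
  have hEval : Φ.eval g = ∑ i ∈ Φ.support, Φ.coeff i * g ^ i := by
    rw [Polynomial.eval_eq_sum, Polynomial.sum_def]
  have hsplit : Φ.eval g = (∑ i ∈ S, Φ.coeff i * g ^ i) +
      ∑ i ∈ Φ.support.filter (fun i => ¬ wdeg w (Φ.coeff i * g ^ i) = wdegG w g Φ),
        Φ.coeff i * g ^ i := by
    rw [hEval, hS, Finset.sum_filter_add_sum_filter_not]
  have hR : Φ.eval g = T +
      ((∑ i ∈ S, (Φ.coeff i * g ^ i - lform w (Φ.coeff i * g ^ i))) +
        ∑ i ∈ Φ.support.filter (fun i => ¬ wdeg w (Φ.coeff i * g ^ i) = wdegG w g Φ),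
          Φ.coeff i * g ^ i) := by
    rw [hsplit, hTalt, Finset.sum_sub_distrib]
    ring
  have hbotδ : (⊥ : WithBot Γ) < (δ : WithBot Γ) := bot_lt_iff_ne_bot.2 WithBot.coe_ne_bot
  have hRsmall : wdeg w ((∑ i ∈ S, (Φ.coeff i * g ^ i - lform w (Φ.coeff i * g ^ i))) +
      ∑ i ∈ Φ.support.filter (fun i => ¬ wdeg w (Φ.coeff i * g ^ i) = wdegG w g Φ),
        Φ.coeff i * g ^ i) < (δ : WithBot Γ) := by
    apply wdeg_add_lt
    · apply wdeg_sum_lt hbotδ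
      intro i hi
      have := wdeg_sub_lform w (f := Φ.coeff i * g ^ i)
        (mul_ne_zero (hSne i hi) (pow_ne_zero i hg))
      rwa [hSdeg i hi] at this
    · apply wdeg_sum_lt hbotδ
      intro i hi
      obtain ⟨hi1, hi2⟩ := Finset.mem_filter.1 hi
      have hle : wdeg w (Φ.coeff i * g ^ i) ≤ wdegG w g Φ :=
        Finset.le_sup (f := fun i => wdeg w (Φ.coeff i * g ^ i)) hi1
      rw [← hδ] at hle hi2
      exact lt_of_le_of_ne hle hi2
  have hfinal : wdeg w (Φ.eval g) = (δ : WithBot Γ) := by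
    rw [hR]
    exact (lform_decomp T _ hHwT hT0 hRsmall).1
  have hmain : wdeg w (Φ.eval g) = wdegG w g Φ := by rw [hfinal, hδ]
  refine ⟨?_, hmain⟩
  apply Nat.sInf_eq_zero.2
  left
  show wdegG w g (Polynomial.derivative^[0] Φ) =
    wdeg w ((Polynomial.derivative^[0] Φ).eval g)
  rw [Function.iterate_zero_apply]
  exact hmain.symm
end

section
/- Let A be a k-subalgebra of k[x] with field of fractions K, let Φ ∈ A[y] be nonzero, g ∈ k[x] nonzero, and w ∈ Γ^n. Assume g^w is algebraic over K^w and that the ideal I(A^w, g^w) of A^w[y] is principal, with generator P(A^w, g^w). Then there exists H ∈ A^w[y] with H ∉ I(A^w, g^w) such that Φ^{w,g} = P(A^w, g^w)^m · H, where m = m_w^g(Φ). -/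
open MvPolynomial Polynomial

set_option synthInstance.maxHeartbeats 1000000
set_option maxHeartbeats 1000000

variable {k : Type*} [Field k] [CharZero k] {n : ℕ}
variable {Γ : Type*} [AddCommGroup Γ] [LinearOrder Γ] [IsOrderedAddMonoid Γ]

set_option linter.unusedSectionVars false

namespace Stmt6Aux

noncomputable def wt (w : Fin n → Γ) (d : Fin n →₀ ℕ) : Γ := ∑ i, d i • w i

lemma wt_add (w : Fin n → Γ) (d e : Fin n →₀ ℕ) : wt w (d + e) = wt w d + wt w e := by
  simp [wt, Finsupp.add_apply, add_smul, Finset.sum_add_distrib]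

lemma wdeg_def (w : Fin n → Γ) (f : MvPolynomial (Fin n) k) :
    wdeg w f = f.support.sup fun d => ((wt w d : Γ) : WithBot Γ) := rfl

noncomputable def hc (w : Fin n → Γ) (γ : Γ) (f : MvPolynomial (Fin n) k) :
    MvPolynomial (Fin n) k :=
  letI : DecidableEq Γ := Classical.decEq _
  ∑ d ∈ f.support.filter (fun d => wt w d = γ), MvPolynomial.monomial d (f.coeff d)

lemma coeff_hc (w : Fin n → Γ) (γ : Γ) (f : MvPolynomial (Fin n) k) (d : Fin n →₀ ℕ) :
    coeff d (hc w γ f) = if wt w d = γ then coeff d f else 0 := by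
  classical
  rw [hc]
  rw [MvPolynomial.coeff_sum]
  rw [Finset.sum_congr rfl (fun e _ => MvPolynomial.coeff_monomial d e _)]
  rw [Finset.sum_ite_eq' _ d (fun e => coeff e f)]
  by_cases h : wt w d = γ
  · simp only [Finset.mem_filter, h, and_true, if_pos h, MvPolynomial.mem_support_iff]
    by_cases h2 : coeff d f = 0 <;> simp [h2]
  · simp [h, Finset.mem_filter]

lemma wdeg_le_iff {w : Fin n → Γ} {f : MvPolynomial (Fin n) k} {b : WithBot Γ} :
    wdeg w f ≤ b ↔ ∀ d ∈ f.support, ((wt w d : Γ) : WithBot Γ) ≤ b :=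
  Finset.sup_le_iff

lemma le_wdeg_of_mem {w : Fin n → Γ} {f : MvPolynomial (Fin n) k} {d : Fin n →₀ ℕ}
    (hd : d ∈ f.support) : ((wt w d : Γ) : WithBot Γ) ≤ wdeg w f := by
  rw [wdeg_def]; exact Finset.le_sup (f := fun d => ((wt w d : Γ) : WithBot Γ)) hd

lemma wdeg_eq_bot_iff {w : Fin n → Γ} {f : MvPolynomial (Fin n) k} :
    wdeg w f = ⊥ ↔ f = 0 := by
  rw [wdeg_def, Finset.sup_eq_bot_iff]
  constructor
  · intro h
    by_contra hf
    obtain ⟨d, hd⟩ := (MvPolynomial.ne_zero_iff).1 hf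
    exact WithBot.coe_ne_bot (h d (MvPolynomial.mem_support_iff.2 hd))
  · rintro rfl; intro d hd; simp at hd

lemma exists_wdeg_eq {w : Fin n → Γ} {f : MvPolynomial (Fin n) k} (hf : f ≠ 0) :
    ∃ γ : Γ, wdeg w f = (γ : WithBot Γ) := by
  obtain ⟨d, hd, h⟩ := Finset.exists_mem_eq_sup f.support
    (MvPolynomial.support_nonempty.2 hf) (fun d => ((wt w d : Γ) : WithBot Γ))
  exact ⟨wt w d, h⟩

lemma hc_eq_zero_of_lt {w : Fin n → Γ} {γ : Γ} {f : MvPolynomial (Fin n) k}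
    (h : wdeg w f < (γ : WithBot Γ)) : hc w γ f = 0 := by
  apply MvPolynomial.ext
  intro d
  rw [coeff_hc, MvPolynomial.coeff_zero]
  by_cases hw : wt w d = γ
  · rw [if_pos hw]
    by_contra hne
    exact absurd (hw ▸ le_wdeg_of_mem (MvPolynomial.mem_support_iff.2 hne)) (not_le.2 h)
  · rw [if_neg hw]

lemma wdeg_eq_iff_hc_ne_zero {w : Fin n → Γ} {γ : Γ} {f : MvPolynomial (Fin n) k}
    (hle : wdeg w f ≤ (γ : WithBot Γ)) :
    wdeg w f = (γ : WithBot Γ) ↔ hc w γ f ≠ 0 := by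
  constructor
  · intro h
    have hf : f ≠ 0 := by
      intro h0; rw [h0] at h; rw [wdeg_eq_bot_iff.2 rfl] at h; exact WithBot.bot_ne_coe h
    obtain ⟨d, hd, hsup⟩ := Finset.exists_mem_eq_sup f.support
      (MvPolynomial.support_nonempty.2 hf) (fun d => ((wt w d : Γ) : WithBot Γ))
    rw [wdeg_def] at h; rw [h] at hsup
    have hwd : wt w d = γ := by exact_mod_cast hsup.symm
    intro h0
    have := coeff_hc w γ f d
    rw [h0, MvPolynomial.coeff_zero, if_pos hwd] at this
    exact (MvPolynomial.mem_support_iff.1 hd) this.symm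
  · intro h
    rcases lt_or_eq_of_le hle with hlt | he
    · exact absurd (hc_eq_zero_of_lt hlt) h
    · exact he

lemma lform_eq_hc {w : Fin n → Γ} {γ : Γ} {f : MvPolynomial (Fin n) k}
    (hγ : wdeg w f = (γ : WithBot Γ)) : lform w f = hc w γ f := by
  classical
  rw [lform, hc]
  congr 1
  ext d
  simp only [Finset.mem_filter, hγ, and_congr_right_iff]
  intro _
  exact_mod_cast Iff.rfl

lemma lform_ne_zero {w : Fin n → Γ} {f : MvPolynomial (Fin n) k} (hf : f ≠ 0) :
    lform w f ≠ 0 := by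
  obtain ⟨γ, hγ⟩ := exists_wdeg_eq (w := w) hf
  rw [lform_eq_hc hγ]
  exact (wdeg_eq_iff_hc_ne_zero hγ.le).1 hγ

lemma wdeg_mul_le (w : Fin n → Γ) (f g : MvPolynomial (Fin n) k) :
    wdeg w (f * g) ≤ wdeg w f + wdeg w g := by
  classical
  rw [wdeg_le_iff]
  intro d hd
  rw [MvPolynomial.mem_support_iff, MvPolynomial.coeff_mul] at hd
  obtain ⟨p, hp, hne⟩ := Finset.exists_ne_zero_of_sum_ne_zero hd
  rw [Finset.HasAntidiagonal.mem_antidiagonal] at hp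
  have h1 : coeff p.1 f ≠ 0 := fun h => hne (by rw [h, zero_mul])
  have h2 : coeff p.2 g ≠ 0 := fun h => hne (by rw [h, mul_zero])
  have hd' : wt w d = wt w p.1 + wt w p.2 := by rw [← hp, wt_add]
  rw [hd', WithBot.coe_add]
  exact add_le_add (le_wdeg_of_mem (MvPolynomial.mem_support_iff.2 h1))
    (le_wdeg_of_mem (MvPolynomial.mem_support_iff.2 h2))

lemma coeff_hc_mul_eq_zero {w : Fin n → Γ} {α β : Γ} {f g : MvPolynomial (Fin n) k}
    {d : Fin n →₀ ℕ} (hd : wt w d ≠ α + β) :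
    coeff d (hc w α f * hc w β g) = 0 := by
  classical
  rw [MvPolynomial.coeff_mul]
  apply Finset.sum_eq_zero
  intro p hp
  rw [Finset.HasAntidiagonal.mem_antidiagonal] at hp
  rw [coeff_hc, coeff_hc]
  by_cases h1 : wt w p.1 = α
  · by_cases h2 : wt w p.2 = β
    · exact absurd (by rw [← hp, wt_add, h1, h2]) hd
    · rw [if_neg h2, mul_zero]
  · rw [if_neg h1, zero_mul]

lemma hc_mul {w : Fin n → Γ} {α β : Γ} {f g : MvPolynomial (Fin n) k}
    (hf : wdeg w f ≤ (α : WithBot Γ)) (hg : wdeg w g ≤ (β : WithBot Γ)) :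
    hc w (α + β) (f * g) = hc w α f * hc w β g := by
  classical
  apply MvPolynomial.ext
  intro d
  by_cases hd : wt w d = α + β
  · rw [coeff_hc, if_pos hd, MvPolynomial.coeff_mul, MvPolynomial.coeff_mul]
    apply Finset.sum_congr rfl
    intro p hp
    rw [Finset.HasAntidiagonal.mem_antidiagonal] at hp
    have hsum : wt w p.1 + wt w p.2 = α + β := by rw [← wt_add, hp, hd]
    rw [coeff_hc, coeff_hc]
    by_cases h1 : wt w p.1 = α
    · have h2 : wt w p.2 = β := by
        apply add_left_cancel (a := α); rw [← h1] at hsum ⊢; exact hsum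
      rw [if_pos h1, if_pos h2]
    · rw [if_neg h1]
      rcases lt_or_gt_of_ne h1 with hlt | hgt
      · have h2 : β < wt w p.2 := by
          have h3 : α + β < α + wt w p.2 := by
            calc α + β = wt w p.1 + wt w p.2 := hsum.symm
            _ < α + wt w p.2 := add_lt_add_left hlt _
          exact lt_of_add_lt_add_left h3
        have hg0 : coeff p.2 g = 0 := by
          by_contra hne
          have hle := (le_wdeg_of_mem (MvPolynomial.mem_support_iff.2 hne)).trans hg
          exact absurd (by exact_mod_cast hle) (not_le.2 h2)
        rw [hg0, mul_zero, zero_mul]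
      · have hf0 : coeff p.1 f = 0 := by
          by_contra hne
          have hle := (le_wdeg_of_mem (MvPolynomial.mem_support_iff.2 hne)).trans hf
          exact absurd (by exact_mod_cast hle) (not_le.2 hgt)
        rw [hf0, zero_mul, zero_mul]
  · rw [coeff_hc, if_neg hd, coeff_hc_mul_eq_zero hd]

lemma wdeg_mul {w : Fin n → Γ} {f g : MvPolynomial (Fin n) k} (hf : f ≠ 0) (hg : g ≠ 0) :
    wdeg w (f * g) = wdeg w f + wdeg w g := by
  obtain ⟨α, hα⟩ := exists_wdeg_eq (w := w) hf
  obtain ⟨β, hβ⟩ := exists_wdeg_eq (w := w) hg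
  have hL : hc w α f * hc w β g ≠ 0 :=
    mul_ne_zero (by rw [← lform_eq_hc hα]; exact lform_ne_zero hf)
      (by rw [← lform_eq_hc hβ]; exact lform_ne_zero hg)
  have hle : wdeg w (f * g) ≤ ((α + β : Γ) : WithBot Γ) := by
    rw [WithBot.coe_add]
    exact (wdeg_mul_le w f g).trans (by rw [hα, hβ])
  rw [hα, hβ, ← WithBot.coe_add]
  exact (wdeg_eq_iff_hc_ne_zero hle).2 (by rw [hc_mul hα.le hβ.le]; exact hL)

lemma lform_mul {w : Fin n → Γ} {f g : MvPolynomial (Fin n) k} (hf : f ≠ 0) (hg : g ≠ 0) :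
    lform w (f * g) = lform w f * lform w g := by
  obtain ⟨α, hα⟩ := exists_wdeg_eq (w := w) hf
  obtain ⟨β, hβ⟩ := exists_wdeg_eq (w := w) hg
  have hfg : wdeg w (f * g) = ((α + β : Γ) : WithBot Γ) := by
    rw [wdeg_mul hf hg, hα, hβ, WithBot.coe_add]
  rw [lform_eq_hc hfg, hc_mul hα.le hβ.le, ← lform_eq_hc hα, ← lform_eq_hc hβ]

lemma wdeg_C {w : Fin n → Γ} {c : k} (hc : c ≠ 0) :
    wdeg w (MvPolynomial.C (σ := Fin n) c) = ((0 : Γ) : WithBot Γ) := by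
  classical
  rw [wdeg_def]
  have hs : (MvPolynomial.C (σ := Fin n) c).support = {0} := by
    rw [MvPolynomial.C_apply, MvPolynomial.support_monomial]
    simp [hc]
  rw [hs, Finset.sup_singleton]
  norm_cast
  simp [wt]

lemma lform_C {w : Fin n → Γ} (c : k) :
    lform w (MvPolynomial.C (σ := Fin n) c) = MvPolynomial.C c := by
  by_cases hc0 : c = 0
  · subst hc0
    rw [map_zero]
    rw [lform]
    simp
  rw [lform_eq_hc (wdeg_C hc0)]
  apply MvPolynomial.ext
  intro d
  rw [coeff_hc]
  by_cases hd : d = 0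
  · subst hd
    rw [if_pos (by simp [wt])]
  · have : coeff d (MvPolynomial.C (σ := Fin n) c) = 0 := by
      rw [MvPolynomial.coeff_C, if_neg (fun h => hd h.symm)]
    rw [this]
    split <;> rfl

lemma lform_one {w : Fin n → Γ} :
    lform w (1 : MvPolynomial (Fin n) k) = 1 := by
  have := lform_C (w := w) (1 : k)
  rwa [map_one] at this

lemma lform_pow {w : Fin n → Γ} {g : MvPolynomial (Fin n) k} (hg : g ≠ 0) (i : ℕ) :
    lform w (g ^ i) = (lform w g) ^ i := by
  induction i with
  | zero => simp only [pow_zero]; exact lform_one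
  | succ i ih =>
    rw [pow_succ, pow_succ, lform_mul (pow_ne_zero i hg) hg, ih]

lemma hc_sum {w : Fin n → Γ} (γ : Γ) {ι : Type*} (s : Finset ι)
    (F : ι → MvPolynomial (Fin n) k) :
    hc w γ (∑ i ∈ s, F i) = ∑ i ∈ s, hc w γ (F i) := by
  apply MvPolynomial.ext
  intro d
  rw [coeff_hc]
  by_cases h : wt w d = γ
  · rw [if_pos h, MvPolynomial.coeff_sum, MvPolynomial.coeff_sum]
    exact Finset.sum_congr rfl (fun i _ => by rw [coeff_hc, if_pos h])
  · rw [if_neg h, MvPolynomial.coeff_sum]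
    symm
    exact Finset.sum_eq_zero (fun i _ => by rw [coeff_hc, if_neg h])

lemma wdeg_sum_le {w : Fin n → Γ} {ι : Type*} (s : Finset ι)
    (F : ι → MvPolynomial (Fin n) k) :
    wdeg w (∑ i ∈ s, F i) ≤ s.sup (fun i => wdeg w (F i)) := by
  rw [wdeg_le_iff]
  intro d hd
  rw [MvPolynomial.mem_support_iff, MvPolynomial.coeff_sum] at hd
  obtain ⟨i, hi, hne⟩ := Finset.exists_ne_zero_of_sum_ne_zero hd
  exact le_trans (le_wdeg_of_mem (MvPolynomial.mem_support_iff.2 hne)) (Finset.le_sup (f := fun i => wdeg w (F i)) hi)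

lemma natCast_eq_C (m : ℕ) :
    ((m : ℕ) : MvPolynomial (Fin n) k) = MvPolynomial.C ((m : ℕ) : k) := by
  rw [map_natCast (MvPolynomial.C : k →+* MvPolynomial (Fin n) k) m]

lemma wdeg_natCast_mul {w : Fin n → Γ} {m : ℕ} (hm : m ≠ 0) (f : MvPolynomial (Fin n) k) :
    wdeg w (((m : ℕ) : MvPolynomial (Fin n) k) * f) = wdeg w f := by
  by_cases hf : f = 0
  · rw [hf, mul_zero]
  · have hmk : ((m : ℕ) : k) ≠ 0 := Nat.cast_ne_zero.2 hm
    rw [natCast_eq_C, wdeg_mul (fun h => hmk (by simpa using h)) hf, wdeg_C hmk]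
    obtain ⟨γ, hγ⟩ := exists_wdeg_eq (w := w) hf
    rw [hγ, ← WithBot.coe_add, zero_add]

lemma lform_natCast_mul {w : Fin n → Γ} {m : ℕ} (hm : m ≠ 0) (f : MvPolynomial (Fin n) k) :
    lform w (((m : ℕ) : MvPolynomial (Fin n) k) * f) =
      ((m : ℕ) : MvPolynomial (Fin n) k) * lform w f := by
  by_cases hf : f = 0
  · rw [hf, mul_zero]
    rw [lform]
    simp
  · have hmk : ((m : ℕ) : k) ≠ 0 := Nat.cast_ne_zero.2 hm
    rw [natCast_eq_C, lform_mul (fun h => hmk (by simpa using h)) hf, lform_C]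

noncomputable def MSet (w : Fin n → Γ) (g : MvPolynomial (Fin n) k)
    (Φ : Polynomial (MvPolynomial (Fin n) k)) : Finset ℕ :=
  letI : DecidableEq (WithBot Γ) := Classical.decEq _
  Φ.support.filter (fun i => wdeg w (Φ.coeff i * g ^ i) = wdegG w g Φ)

lemma pLform_eq (w : Fin n → Γ) (g : MvPolynomial (Fin n) k)
    (Φ : Polynomial (MvPolynomial (Fin n) k)) :
    pLform w g Φ =
      ∑ i ∈ MSet w g Φ, Polynomial.C (lform w (Φ.coeff i)) * Polynomial.X ^ i := rfl

lemma mem_MSet {w : Fin n → Γ} {g : MvPolynomial (Fin n) k}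
    {Φ : Polynomial (MvPolynomial (Fin n) k)} {i : ℕ} :
    i ∈ MSet w g Φ ↔ i ∈ Φ.support ∧ wdeg w (Φ.coeff i * g ^ i) = wdegG w g Φ := by
  rw [MSet]
  letI : DecidableEq (WithBot Γ) := Classical.decEq _
  exact Finset.mem_filter

lemma wdegG_eq_coe {w : Fin n → Γ} {g : MvPolynomial (Fin n) k}
    {Φ : Polynomial (MvPolynomial (Fin n) k)} (hΦ : Φ ≠ 0) (hg : g ≠ 0) :
    ∃ δ : Γ, wdegG w g Φ = (δ : WithBot Γ) := by
  obtain ⟨i, hi, hsup⟩ := Finset.exists_mem_eq_sup Φ.support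
    (Polynomial.support_nonempty.2 hΦ) (fun i => wdeg w (Φ.coeff i * g ^ i))
  have hne : Φ.coeff i * g ^ i ≠ 0 :=
    mul_ne_zero (Polynomial.mem_support_iff.1 hi) (pow_ne_zero _ hg)
  obtain ⟨δ, hδ⟩ := exists_wdeg_eq (w := w) hne
  exact ⟨δ, by rw [wdegG, hsup, hδ]⟩

lemma MSet_nonempty {w : Fin n → Γ} {g : MvPolynomial (Fin n) k}
    {Φ : Polynomial (MvPolynomial (Fin n) k)} (hΦ : Φ ≠ 0) :
    ∃ i, i ∈ MSet w g Φ := by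
  obtain ⟨i, hi, hsup⟩ := Finset.exists_mem_eq_sup Φ.support
    (Polynomial.support_nonempty.2 hΦ) (fun i => wdeg w (Φ.coeff i * g ^ i))
  exact ⟨i, mem_MSet.2 ⟨hi, hsup.symm⟩⟩

lemma le_wdegG_of_mem {w : Fin n → Γ} {g : MvPolynomial (Fin n) k}
    {Φ : Polynomial (MvPolynomial (Fin n) k)} {i : ℕ} (hi : i ∈ Φ.support) :
    wdeg w (Φ.coeff i * g ^ i) ≤ wdegG w g Φ :=
  Finset.le_sup (f := fun i => wdeg w (Φ.coeff i * g ^ i)) hi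

lemma wdeg_eval_le (w : Fin n → Γ) (g : MvPolynomial (Fin n) k)
    (Φ : Polynomial (MvPolynomial (Fin n) k)) :
    wdeg w (Φ.eval g) ≤ wdegG w g Φ := by
  rw [Polynomial.eval_eq_sum, Polynomial.sum_def]
  exact wdeg_sum_le _ _

lemma coeff_pLform (w : Fin n → Γ) (g : MvPolynomial (Fin n) k)
    (Φ : Polynomial (MvPolynomial (Fin n) k)) (j : ℕ) :
    (pLform w g Φ).coeff j =
      if j ∈ MSet w g Φ then lform w (Φ.coeff j) else 0 := by
  classical
  rw [pLform_eq, Polynomial.finset_sum_coeff]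
  have hterm : ∀ i ∈ MSet w g Φ,
      (Polynomial.C (lform w (Φ.coeff i)) * Polynomial.X ^ i).coeff j
      = if i = j then lform w (Φ.coeff i) else 0 := by
    intro i _
    rw [Polynomial.coeff_C_mul, Polynomial.coeff_X_pow]
    by_cases h : j = i
    · subst h; simp
    · rw [if_neg h, mul_zero, if_neg (fun hh => h hh.symm)]
  rw [Finset.sum_congr rfl hterm, Finset.sum_ite_eq' _ j _]

lemma eval_pLform {w : Fin n → Γ} {g : MvPolynomial (Fin n) k}
    {Φ : Polynomial (MvPolynomial (Fin n) k)} {δ : Γ} (hΦ : Φ ≠ 0) (hg : g ≠ 0)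
    (hδ : wdegG w g Φ = (δ : WithBot Γ)) :
    (pLform w g Φ).eval (lform w g) = hc w δ (Φ.eval g) := by
  classical
  rw [pLform_eq, Polynomial.eval_finset_sum]
  conv_rhs => rw [Polynomial.eval_eq_sum, Polynomial.sum_def]
  rw [hc_sum]
  have hsub : MSet w g Φ ⊆ Φ.support := fun i hi => (mem_MSet.1 hi).1
  rw [← Finset.sum_subset hsub (fun i hi hni => ?_)]
  · apply Finset.sum_congr rfl
    intro i hi
    obtain ⟨his, hiw⟩ := mem_MSet.1 hi
    have hφ : Φ.coeff i ≠ 0 := Polynomial.mem_support_iff.1 his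
    rw [Polynomial.eval_mul, Polynomial.eval_C, Polynomial.eval_pow, Polynomial.eval_X]
    rw [← lform_pow hg, ← lform_mul hφ (pow_ne_zero _ hg)]
    rw [lform_eq_hc (by rw [hiw, hδ])]
  · -- i in support, not in MSet: hc δ (Φ.coeff i * g^i) = 0
    apply hc_eq_zero_of_lt
    rcases lt_or_eq_of_le (le_wdegG_of_mem (w := w) (g := g) hi) with h | h
    · rw [← hδ]; exact h
    · exact absurd (mem_MSet.2 ⟨hi, h⟩) hni

lemma eval_pLform_ne_zero_iff {w : Fin n → Γ} {g : MvPolynomial (Fin n) k}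
    {Φ : Polynomial (MvPolynomial (Fin n) k)} (hΦ : Φ ≠ 0) (hg : g ≠ 0) :
    (pLform w g Φ).eval (lform w g) ≠ 0 ↔ wdeg w (Φ.eval g) = wdegG w g Φ := by
  obtain ⟨δ, hδ⟩ := wdegG_eq_coe (w := w) hΦ hg
  rw [eval_pLform hΦ hg hδ, hδ]
  exact (wdeg_eq_iff_hc_ne_zero (hδ ▸ wdeg_eval_le w g Φ)).symm

lemma exists_ne_zero_mem_MSet {w : Fin n → Γ} {g : MvPolynomial (Fin n) k}
    {Φ : Polynomial (MvPolynomial (Fin n) k)} (hΦ : Φ ≠ 0)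
    (h : (pLform w g Φ).eval (lform w g) = 0) :
    ∃ i ∈ MSet w g Φ, i ≠ 0 := by
  by_contra hno
  push_neg at hno
  obtain ⟨i0, hi0⟩ := MSet_nonempty (w := w) (g := g) hΦ
  have hi00 : i0 = 0 := hno i0 hi0
  subst hi00
  have hM : MSet w g Φ = {0} := by
    apply Finset.eq_singleton_iff_unique_mem.2
    exact ⟨hi0, fun j hj => hno j hj⟩
  rw [pLform_eq, hM] at h
  rw [Finset.sum_singleton, pow_zero, mul_one, Polynomial.eval_C] at h
  exact lform_ne_zero (Polynomial.mem_support_iff.1 (mem_MSet.1 hi0).1) h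

lemma sup_add_coe {ι : Type*} (s : Finset ι) (F : ι → WithBot Γ) (γ : Γ) :
    s.sup F + (γ : WithBot Γ) = s.sup (fun i => F i + (γ : WithBot Γ)) := by
  classical
  induction s using Finset.cons_induction with
  | empty => simp
  | cons a s ha ih =>
    rw [Finset.sup_cons, Finset.sup_cons, ← ih]
    rcases le_total (F a) (s.sup F) with hle | hle
    · rw [sup_eq_right.2 hle, sup_eq_right.2 (add_le_add_left hle _)]
    · rw [sup_eq_left.2 hle, sup_eq_left.2 (add_le_add_left hle _)]

lemma coe_add_right_cancel {a b : WithBot Γ} {γ : Γ}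
    (h : a + (γ : WithBot Γ) = b + (γ : WithBot Γ)) : a = b := by
  cases a with
  | bot =>
    cases b with
    | bot => rfl
    | coe y =>
      rw [WithBot.bot_add, ← WithBot.coe_add] at h
      exact absurd h.symm (WithBot.coe_ne_bot)
  | coe x =>
    cases b with
    | bot =>
      rw [WithBot.bot_add, ← WithBot.coe_add] at h
      exact absurd h (WithBot.coe_ne_bot)
    | coe y =>
      rw [← WithBot.coe_add, ← WithBot.coe_add] at h
      have h2 : x + γ = y + γ := WithBot.coe_inj.1 h
      rw [add_right_cancel h2]

lemma coeff_derivative_eq (Φ : Polynomial (MvPolynomial (Fin n) k)) (j : ℕ) :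
    (Polynomial.derivative Φ).coeff j
      = (((j+1 : ℕ)) : MvPolynomial (Fin n) k) * Φ.coeff (j+1) := by
  rw [Polynomial.coeff_derivative]
  push_cast
  ring

lemma mem_support_derivative (Φ : Polynomial (MvPolynomial (Fin n) k)) (j : ℕ) :
    j ∈ (Polynomial.derivative Φ).support ↔ (j+1) ∈ Φ.support := by
  rw [Polynomial.mem_support_iff, Polynomial.mem_support_iff, coeff_derivative_eq]
  constructor
  · intro h hc
    rw [hc, mul_zero] at h
    exact h rfl
  · intro h
    exact mul_ne_zero (Nat.cast_ne_zero.2 (Nat.succ_ne_zero j)) h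

lemma wdeg_deriv_term {w : Fin n → Γ} {g : MvPolynomial (Fin n) k} (hg : g ≠ 0) {γg : Γ}
    (hγg : wdeg w g = (γg : WithBot Γ)) (Φ : Polynomial (MvPolynomial (Fin n) k)) (j : ℕ) :
    wdeg w ((Polynomial.derivative Φ).coeff j * g ^ j) + (γg : WithBot Γ)
      = wdeg w (Φ.coeff (j+1) * g ^ (j+1)) := by
  rw [coeff_derivative_eq]
  by_cases hφ : Φ.coeff (j+1) = 0
  · rw [hφ, zero_mul, mul_zero, zero_mul]
    rw [show wdeg w (0 : MvPolynomial (Fin n) k) = ⊥ from wdeg_eq_bot_iff.2 rfl,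
      WithBot.bot_add]
  · have h1 : (((j+1 : ℕ)) : MvPolynomial (Fin n) k) * Φ.coeff (j+1) * g ^ j
        = (((j+1 : ℕ)) : MvPolynomial (Fin n) k) * (Φ.coeff (j+1) * g ^ j) := by ring
    rw [h1, wdeg_natCast_mul (Nat.succ_ne_zero j)]
    rw [pow_succ, ← mul_assoc, wdeg_mul (mul_ne_zero hφ (pow_ne_zero _ hg)) hg, hγg]

lemma wdegG_derivative_add {w : Fin n → Γ} {g : MvPolynomial (Fin n) k}
    {Φ : Polynomial (MvPolynomial (Fin n) k)} (hg : g ≠ 0) {γg : Γ}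
    (hγg : wdeg w g = (γg : WithBot Γ)) (hM1 : ∃ i ∈ MSet w g Φ, i ≠ 0) :
    wdegG w g (Polynomial.derivative Φ) + (γg : WithBot Γ) = wdegG w g Φ := by
  rw [wdegG, sup_add_coe]
  apply le_antisymm
  · apply Finset.sup_le
    intro j hj
    rw [wdeg_deriv_term hg hγg Φ j]
    exact le_wdegG_of_mem ((mem_support_derivative Φ j).1 hj)
  · obtain ⟨i, hiM, hi0⟩ := hM1
    obtain ⟨his, hiw⟩ := mem_MSet.1 hiM
    obtain ⟨j, rfl⟩ := Nat.exists_eq_succ_of_ne_zero hi0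
    rw [← hiw, ← wdeg_deriv_term hg hγg Φ j]
    exact Finset.le_sup
      (f := fun j => wdeg w ((Polynomial.derivative Φ).coeff j * g ^ j) + (γg : WithBot Γ))
      ((mem_support_derivative Φ j).2 his)

lemma mem_MSet_derivative_iff {w : Fin n → Γ} {g : MvPolynomial (Fin n) k}
    {Φ : Polynomial (MvPolynomial (Fin n) k)} (hg : g ≠ 0) {γg : Γ}
    (hγg : wdeg w g = (γg : WithBot Γ)) (hM1 : ∃ i ∈ MSet w g Φ, i ≠ 0) (j : ℕ) :
    j ∈ MSet w g (Polynomial.derivative Φ) ↔ (j+1) ∈ MSet w g Φ := by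
  rw [mem_MSet, mem_MSet]
  rw [and_congr (mem_support_derivative Φ j) Iff.rfl]
  apply and_congr_right
  intro _
  constructor
  · intro h
    rw [← wdeg_deriv_term hg hγg Φ j, h, wdegG_derivative_add hg hγg hM1]
  · intro h
    apply coe_add_right_cancel (γ := γg)
    rw [wdeg_deriv_term hg hγg Φ j, h, wdegG_derivative_add hg hγg hM1]

lemma derivative_ne_zero_of_MSet {w : Fin n → Γ} {g : MvPolynomial (Fin n) k}
    {Φ : Polynomial (MvPolynomial (Fin n) k)} (hM1 : ∃ i ∈ MSet w g Φ, i ≠ 0) :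
    Polynomial.derivative Φ ≠ 0 := by
  obtain ⟨i, hiM, hi0⟩ := hM1
  obtain ⟨j, rfl⟩ := Nat.exists_eq_succ_of_ne_zero hi0
  intro h0
  have hm := (mem_support_derivative Φ j).2 (mem_MSet.1 hiM).1
  rw [h0] at hm
  simp at hm

lemma pLform_derivative {w : Fin n → Γ} {g : MvPolynomial (Fin n) k}
    {Φ : Polynomial (MvPolynomial (Fin n) k)} (hg : g ≠ 0)
    (hM1 : ∃ i ∈ MSet w g Φ, i ≠ 0) :
    pLform w g (Polynomial.derivative Φ) = Polynomial.derivative (pLform w g Φ) := by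
  obtain ⟨γg, hγg⟩ := exists_wdeg_eq (w := w) hg
  apply Polynomial.ext
  intro j
  conv_rhs => rw [Polynomial.coeff_derivative]
  rw [coeff_pLform, coeff_pLform]
  by_cases h : (j+1) ∈ MSet w g Φ
  · rw [if_pos ((mem_MSet_derivative_iff hg hγg hM1 j).2 h), if_pos h, coeff_derivative_eq]
    rw [lform_natCast_mul (Nat.succ_ne_zero j)]
    push_cast
    ring
  · rw [if_neg (fun hh => h ((mem_MSet_derivative_iff hg hγg hM1 j).1 hh)), if_neg h, zero_mul]

def SSet (w : Fin n → Γ) (g : MvPolynomial (Fin n) k)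
    (Φ : Polynomial (MvPolynomial (Fin n) k)) : Set ℕ :=
  {i : ℕ |
    wdegG w g (Polynomial.derivative^[i] Φ) = wdeg w ((Polynomial.derivative^[i] Φ).eval g)}

lemma mwg_eq_sInf (w : Fin n → Γ) (g : MvPolynomial (Fin n) k)
    (Φ : Polynomial (MvPolynomial (Fin n) k)) : mwg w g Φ = sInf (SSet w g Φ) := rfl

lemma mem_SSet_C {w : Fin n → Γ} {g : MvPolynomial (Fin n) k}
    {c : MvPolynomial (Fin n) k} (hc : c ≠ 0) :
    wdegG w g (Polynomial.C c) = wdeg w ((Polynomial.C c).eval g) := by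
  rw [Polynomial.eval_C, wdegG, Polynomial.support_C hc, Finset.sup_singleton,
    Polynomial.coeff_C_zero, pow_zero, mul_one]

lemma natDegree_mem_SSet {w : Fin n → Γ} {g : MvPolynomial (Fin n) k}
    {Φ : Polynomial (MvPolynomial (Fin n) k)} (hΦ : Φ ≠ 0) :
    Φ.natDegree ∈ SSet w g Φ := by
  have hdeg : (Polynomial.derivative^[Φ.natDegree] Φ).natDegree ≤ 0 := by
    have := Polynomial.natDegree_iterate_derivative Φ Φ.natDegree
    omega
  have hC : Polynomial.derivative^[Φ.natDegree] Φ
      = Polynomial.C ((Polynomial.derivative^[Φ.natDegree] Φ).coeff 0) :=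
    Polynomial.eq_C_of_natDegree_le_zero hdeg
  have hcoeff : (Polynomial.derivative^[Φ.natDegree] Φ).coeff 0
      = (0 + Φ.natDegree).descFactorial Φ.natDegree • Φ.coeff (0 + Φ.natDegree) :=
    Polynomial.coeff_iterate_derivative Φ 0
  have hne : (Polynomial.derivative^[Φ.natDegree] Φ).coeff 0 ≠ 0 := by
    rw [hcoeff, nsmul_eq_mul]
    apply mul_ne_zero
    · apply Nat.cast_ne_zero.2
      rw [zero_add, Nat.descFactorial_self]
      exact Nat.factorial_ne_zero _
    · rw [zero_add]
      exact Polynomial.leadingCoeff_ne_zero.2 hΦ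
  show wdegG w g (Polynomial.derivative^[Φ.natDegree] Φ)
      = wdeg w ((Polynomial.derivative^[Φ.natDegree] Φ).eval g)
  rw [hC]
  exact mem_SSet_C hne

lemma mwg_mem_SSet {w : Fin n → Γ} {g : MvPolynomial (Fin n) k}
    {Φ : Polynomial (MvPolynomial (Fin n) k)} (hΦ : Φ ≠ 0) :
    mwg w g Φ ∈ SSet w g Φ := by
  rw [mwg_eq_sInf]
  exact Nat.sInf_mem ⟨Φ.natDegree, natDegree_mem_SSet hΦ⟩

lemma SSet_derivative_iff (w : Fin n → Γ) (g : MvPolynomial (Fin n) k)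
    (Φ : Polynomial (MvPolynomial (Fin n) k)) (i : ℕ) :
    i ∈ SSet w g (Polynomial.derivative Φ) ↔ (i+1) ∈ SSet w g Φ := by
  simp only [SSet, Set.mem_setOf_eq, Function.iterate_succ_apply]

lemma mwg_derivative {w : Fin n → Γ} {g : MvPolynomial (Fin n) k}
    {Φ : Polynomial (MvPolynomial (Fin n) k)} {m : ℕ} (h : mwg w g Φ = m + 1) :
    mwg w g (Polynomial.derivative Φ) = m := by
  have hmem : (m+1) ∈ SSet w g Φ := by
    rw [← h, mwg_eq_sInf]
    apply Nat.sInf_mem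
    by_contra hemp
    rw [Set.not_nonempty_iff_eq_empty] at hemp
    rw [mwg_eq_sInf, hemp, Nat.sInf_empty] at h
    exact Nat.succ_ne_zero m h.symm
  have hm : m ∈ SSet w g (Polynomial.derivative Φ) := (SSet_derivative_iff w g Φ m).2 hmem
  rw [mwg_eq_sInf]
  apply le_antisymm (Nat.sInf_le hm)
  apply le_csInf ⟨m, hm⟩
  intro i hi
  have h2 := Nat.sInf_le ((SSet_derivative_iff w g Φ i).1 hi)
  rw [← mwg_eq_sInf, h] at h2
  omega

lemma zero_mem_SSet_iff {w : Fin n → Γ} {g : MvPolynomial (Fin n) k}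
    {Φ : Polynomial (MvPolynomial (Fin n) k)} :
    0 ∈ SSet w g Φ ↔ wdegG w g Φ = wdeg w (Φ.eval g) := by
  simp only [SSet, Set.mem_setOf_eq, Function.iterate_zero_apply]

lemma core_dvd {S : Type*} [CommRing S] [IsDomain S] [CharZero S]
    {P Φ H : Polynomial S} (hP : Prime P) (hPdeg : P.natDegree ≠ 0)
    (hΦ : Φ ≠ 0) (hPΦ : P ∣ Φ) {m : ℕ}
    (hd : Polynomial.derivative Φ = P ^ m * H) (hH : ¬ P ∣ H) :
    ∃ U : Polynomial S, Φ = P ^ (m+1) * U ∧ ¬ P ∣ U := by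
  classical
  have hP0 : P ≠ 0 := hP.ne_zero
  have hndvd : ∀ q : Polynomial S, q ≠ 0 → q.natDegree < P.natDegree → ¬ P ∣ q := by
    intro q hq hdeg hdvd
    exact absurd (Polynomial.natDegree_le_of_dvd hdvd hq) (by omega)
  have hdP : Polynomial.derivative P ≠ 0 := by
    intro h0
    have hc := Polynomial.coeff_derivative P (P.natDegree - 1)
    rw [h0, Polynomial.coeff_zero] at hc
    have he : P.natDegree - 1 + 1 = P.natDegree :=
      Nat.succ_pred_eq_of_pos (Nat.pos_of_ne_zero hPdeg)
    rcases mul_eq_zero.1 hc.symm with h | h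
    · rw [he] at h
      exact Polynomial.leadingCoeff_ne_zero.2 hP0 h
    · have h2 : ((P.natDegree - 1 + 1 : ℕ) : S) = 0 := by push_cast; exact h
      have h3 := Nat.cast_eq_zero.1 h2
      omega
  have hdvdP : ¬ P ∣ Polynomial.derivative P :=
    hndvd _ hdP (Polynomial.natDegree_derivative_lt hPdeg)
  have hbound : ∀ i, P ^ i ∣ Φ → i ≤ Φ.natDegree := by
    intro i hi
    calc i ≤ i * P.natDegree := Nat.le_mul_of_pos_right i (Nat.pos_of_ne_zero hPdeg)
    _ = (P ^ i).natDegree := (Polynomial.natDegree_pow P i).symm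
    _ ≤ Φ.natDegree := Polynomial.natDegree_le_of_dvd hi hΦ
  have hexist : ∃ e : ℕ, 1 ≤ e ∧ P ^ e ∣ Φ ∧ ¬ P ^ (e+1) ∣ Φ := by
    refine ⟨Nat.findGreatest (fun i => P ^ i ∣ Φ) Φ.natDegree, ?_, ?_, ?_⟩
    · exact Nat.le_findGreatest (hbound 1 (by simpa using hPΦ)) (by simpa using hPΦ)
    · exact Nat.findGreatest_spec (P := fun i => P ^ i ∣ Φ)
        (hbound 1 (by simpa using hPΦ)) (by simpa using hPΦ)
    · intro hdvd
      exact Nat.findGreatest_is_greatest (Nat.lt_succ_self _) (hbound _ hdvd) hdvd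
  obtain ⟨e, he1, heΦ, hnot⟩ := hexist
  obtain ⟨U, hU⟩ := heΦ
  have hPU : ¬ P ∣ U := by
    intro ⟨V, hV⟩
    exact hnot ⟨V, by rw [hU, hV, pow_succ]; ring⟩
  obtain ⟨e', rfl⟩ := Nat.exists_eq_succ_of_ne_zero (by omega : e ≠ 0)
  have hW : Polynomial.derivative Φ = P ^ e' *
      (Polynomial.C ((e' + 1 : ℕ) : S) * Polynomial.derivative P * U
        + P * Polynomial.derivative U) := by
    rw [hU, Polynomial.derivative_mul, Polynomial.derivative_pow]
    simp only [Nat.succ_eq_add_one, Nat.add_sub_cancel]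
    ring
  set W := Polynomial.C ((e' + 1 : ℕ) : S) * Polynomial.derivative P * U
      + P * Polynomial.derivative U with hWdef
  have hPW : ¬ P ∣ W := by
    intro hdvd
    have h1 : P ∣ Polynomial.C ((e' + 1 : ℕ) : S) * Polynomial.derivative P * U := by
      have h2 : P ∣ P * Polynomial.derivative U := Dvd.intro _ rfl
      have := dvd_sub hdvd h2
      simpa [hWdef] using this
    rcases hP.dvd_mul.1 h1 with h3 | h3
    · rcases hP.dvd_mul.1 h3 with h4 | h4
      · apply hndvd _ _ _ h4
        · exact fun h => (Nat.cast_ne_zero.2 (Nat.succ_ne_zero e'))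
            (by simpa using congrArg (fun q => Polynomial.coeff q 0) h)
        · rw [Polynomial.natDegree_C]
          omega
      · exact hdvdP h4
    · exact hPU h3
  have hWne : W ≠ 0 := fun h => hPW (h ▸ dvd_zero P)
  have hkey : P ^ e' * W = P ^ m * H := by rw [← hW, hd]
  have hem : e' = m := by
    rcases le_total e' m with hle | hle
    · obtain ⟨c, rfl⟩ := Nat.exists_eq_add_of_le hle
      rw [pow_add, mul_assoc] at hkey
      have hcW : W = P ^ c * H := mul_left_cancel₀ (pow_ne_zero _ hP0) hkey
      rcases Nat.eq_zero_or_pos c with rfl | hc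
      · omega
      · exfalso
        apply hPW
        rw [hcW]
        exact Dvd.dvd.mul_right (dvd_pow_self P (by omega)) H
    · obtain ⟨c, rfl⟩ := Nat.exists_eq_add_of_le hle
      rw [pow_add, mul_assoc] at hkey
      have hcH : P ^ c * W = H := mul_left_cancel₀ (pow_ne_zero _ hP0) hkey.symm |>.symm
      rcases Nat.eq_zero_or_pos c with rfl | hc
      · omega
      · exfalso
        apply hH
        rw [← hcH]
        exact Dvd.dvd.mul_right (dvd_pow_self P (by omega)) W
  subst hem
  exact ⟨U, by rw [hU], hPU⟩

lemma lform_mem_initAlg {w : Fin n → Γ} {A : Subalgebra k (MvPolynomial (Fin n) k)}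
    {f : MvPolynomial (Fin n) k} (hf : f ∈ A) (hf0 : f ≠ 0) :
    lform w f ∈ initAlg w A :=
  Algebra.subset_adjoin ⟨f, ⟨hf, fun h => hf0 h⟩, rfl⟩

lemma coeff_sum_C_mul_X {T : Type*} [CommRing T] (s : Finset ℕ) (u : ℕ → T) (j : ℕ) :
    (∑ i ∈ s, Polynomial.C (u i) * Polynomial.X ^ i).coeff j = if j ∈ s then u j else 0 := by
  classical
  rw [Polynomial.finset_sum_coeff]
  have hterm : ∀ i ∈ s, (Polynomial.C (u i) * Polynomial.X ^ i).coeff j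
      = if i = j then u i else 0 := by
    intro i _
    rw [Polynomial.coeff_C_mul, Polynomial.coeff_X_pow]
    by_cases h : j = i
    · subst h; simp
    · rw [if_neg h, mul_zero, if_neg (fun hh => h hh.symm)]
  rw [Finset.sum_congr rfl hterm, Finset.sum_ite_eq' _ j _]

lemma pLform_ne_zero {w : Fin n → Γ} {g : MvPolynomial (Fin n) k}
    {Φ : Polynomial (MvPolynomial (Fin n) k)} (hΦ : Φ ≠ 0) :
    pLform w g Φ ≠ 0 := by
  obtain ⟨i0, hi0⟩ := MSet_nonempty (w := w) (g := g) hΦ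
  intro h
  have hc := coeff_pLform w g Φ i0
  rw [h, Polynomial.coeff_zero, if_pos hi0] at hc
  exact lform_ne_zero (Polynomial.mem_support_iff.1 (mem_MSet.1 hi0).1) hc.symm

lemma exists_tilde {w : Fin n → Γ} {A : Subalgebra k (MvPolynomial (Fin n) k)}
    (g : MvPolynomial (Fin n) k) {Φ : Polynomial (MvPolynomial (Fin n) k)}
    (hΦA : ∀ i, Φ.coeff i ∈ A) :
    ∃ Ψ : Polynomial (initAlg w A),
      Polynomial.map (algebraMap (initAlg w A) (MvPolynomial (Fin n) k)) Ψ = pLform w g Φ := by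
  classical
  refine ⟨∑ i ∈ (MSet w g Φ).attach,
    Polynomial.C (⟨lform w (Φ.coeff i.1),
      lform_mem_initAlg (hΦA i.1)
        (Polynomial.mem_support_iff.1 (mem_MSet.1 i.2).1)⟩ : initAlg w A)
      * Polynomial.X ^ (i.1 : ℕ), ?_⟩
  rw [Polynomial.map_sum, pLform_eq, ← Finset.sum_attach (MSet w g Φ)
    (fun i => Polynomial.C (lform w (Φ.coeff i)) * Polynomial.X ^ i)]
  apply Finset.sum_congr rfl
  intro i _
  rw [Polynomial.map_mul, Polynomial.map_C, Polynomial.map_pow, Polynomial.map_X]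
  rfl

lemma aeval_eq_eval_map {w : Fin n → Γ} {A : Subalgebra k (MvPolynomial (Fin n) k)}
    (x : MvPolynomial (Fin n) k) (Ψ : Polynomial (initAlg w A)) :
    (Polynomial.aeval x Ψ : MvPolynomial (Fin n) k)
      = Polynomial.eval x
        (Polynomial.map (algebraMap (initAlg w A) (MvPolynomial (Fin n) k)) Ψ) := by
  rw [Polynomial.aeval_def, ← Polynomial.eval_map]

lemma exists_ker_elem {w : Fin n → Γ} {A : Subalgebra k (MvPolynomial (Fin n) k)}
    {g : MvPolynomial (Fin n) k}
    (halg : IsAlgebraic (KW w A)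
      (algebraMap (MvPolynomial (Fin n) k) (FractionRing (MvPolynomial (Fin n) k))
        (lform w g))) :
    ∃ Q : Polynomial (initAlg w A), Q ≠ 0 ∧
      (Polynomial.aeval (lform w g) Q : MvPolynomial (Fin n) k) = 0 := by
  classical
  obtain ⟨p, hp0, hpe⟩ := halg
  have hcl : Subring.closure
      ((algebraMap (MvPolynomial (Fin n) k) (FractionRing (MvPolynomial (Fin n) k))) ''
        ((initAlg w A : Set (MvPolynomial (Fin n) k))))
      = Subring.map
          (algebraMap (MvPolynomial (Fin n) k) (FractionRing (MvPolynomial (Fin n) k)))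
          (initAlg w A).toSubring := by
    rw [← Subalgebra.coe_toSubring, ← Subring.coe_map, Subring.closure_eq]
  have hD : ∀ i : ℕ, ∃ a b : MvPolynomial (Fin n) k,
      a ∈ initAlg w A ∧ b ∈ initAlg w A ∧
      (algebraMap (MvPolynomial (Fin n) k) (FractionRing (MvPolynomial (Fin n) k))) b ≠ 0 ∧
      (algebraMap (KW w A) (FractionRing (MvPolynomial (Fin n) k))) (p.coeff i) *
        (algebraMap (MvPolynomial (Fin n) k) (FractionRing (MvPolynomial (Fin n) k))) b
      = (algebraMap (MvPolynomial (Fin n) k) (FractionRing (MvPolynomial (Fin n) k))) a := by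
    intro i
    by_cases hc : (algebraMap (KW w A) (FractionRing (MvPolynomial (Fin n) k))) (p.coeff i) = 0
    · exact ⟨0, 1, zero_mem _, one_mem _,
        (by rw [map_one]; exact one_ne_zero), by rw [hc, map_zero, zero_mul]⟩
    · have hmem : ((p.coeff i : KW w A) : FractionRing (MvPolynomial (Fin n) k)) ∈ KW w A :=
        (p.coeff i).2
      obtain ⟨y, hy, z, hz, hyz⟩ := Subfield.mem_closure_iff.1
        (show _ ∈ Subfield.closure
          ((algebraMap (MvPolynomial (Fin n) k) (FractionRing (MvPolynomial (Fin n) k))) ''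
            ((initAlg w A : Set (MvPolynomial (Fin n) k)))) from hmem)
      rw [hcl, Subring.mem_map] at hy hz
      obtain ⟨a, ha, rfl⟩ := hy
      obtain ⟨b, hb, rfl⟩ := hz
      have hz0 : (algebraMap (MvPolynomial (Fin n) k)
          (FractionRing (MvPolynomial (Fin n) k))) b ≠ 0 := by
        intro h0
        rw [h0, div_zero] at hyz
        exact hc hyz.symm
      refine ⟨a, b, Subalgebra.mem_toSubring.1 ha, Subalgebra.mem_toSubring.1 hb, hz0, ?_⟩
      rw [show (algebraMap (KW w A) (FractionRing (MvPolynomial (Fin n) k))) (p.coeff i)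
          = ((p.coeff i : KW w A) : FractionRing (MvPolynomial (Fin n) k)) from rfl]
      rw [← hyz, div_mul_cancel₀ _ hz0]
  choose a b ha hb hbne heq using hD
  set N := p.natDegree with hN
  have hprodmem : ∀ (s : Finset ℕ), (∏ j ∈ s, b j) ∈ initAlg w A :=
    fun s => prod_mem (fun j _ => hb j)
  set u : ℕ → (initAlg w A) := fun i =>
    ⟨a i * ∏ j ∈ (Finset.range (N+1)).erase i, b j, mul_mem (ha i) (hprodmem _)⟩ with hu_def
  have hu : ∀ i ∈ Finset.range (N+1),
      (algebraMap (MvPolynomial (Fin n) k) (FractionRing (MvPolynomial (Fin n) k)))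
        ((u i : MvPolynomial (Fin n) k))
      = (algebraMap (KW w A) (FractionRing (MvPolynomial (Fin n) k))) (p.coeff i) *
        (algebraMap (MvPolynomial (Fin n) k) (FractionRing (MvPolynomial (Fin n) k)))
          (∏ j ∈ Finset.range (N+1), b j) := by
    intro i hi
    show (algebraMap (MvPolynomial (Fin n) k) (FractionRing (MvPolynomial (Fin n) k)))
        (a i * ∏ j ∈ (Finset.range (N+1)).erase i, b j) = _
    rw [show (∏ j ∈ Finset.range (N+1), b j)
        = b i * ∏ j ∈ (Finset.range (N+1)).erase i, b j from
        (Finset.mul_prod_erase _ _ hi).symm]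
    rw [map_mul, map_mul, ← mul_assoc, heq i]
  have hBne : (algebraMap (MvPolynomial (Fin n) k) (FractionRing (MvPolynomial (Fin n) k)))
      (∏ j ∈ Finset.range (N+1), b j) ≠ 0 := by
    rw [map_prod]
    exact Finset.prod_ne_zero_iff.2 (fun j _ => hbne j)
  refine ⟨∑ i ∈ Finset.range (N+1), Polynomial.C (u i) * Polynomial.X ^ i, ?_, ?_⟩
  · intro h0
    have hcN := coeff_sum_C_mul_X (Finset.range (N+1)) u N
    rw [h0, Polynomial.coeff_zero, if_pos (Finset.self_mem_range_succ N)] at hcN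
    have hφuN : (algebraMap (MvPolynomial (Fin n) k) (FractionRing (MvPolynomial (Fin n) k)))
        ((u N : MvPolynomial (Fin n) k)) = 0 := by
      rw [← hcN]
      exact map_zero _
    rw [hu N (Finset.self_mem_range_succ N)] at hφuN
    rcases mul_eq_zero.1 hφuN with h | h
    · have hpN : p.coeff N ≠ 0 := Polynomial.leadingCoeff_ne_zero.2 hp0
      exact hpN (Subtype.val_injective h)
    · exact hBne h
  · apply IsFractionRing.injective (MvPolynomial (Fin n) k)
      (FractionRing (MvPolynomial (Fin n) k))
    rw [map_zero]
    rw [show ((Polynomial.aeval (lform w g)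
          (∑ i ∈ Finset.range (N+1), Polynomial.C (u i) * Polynomial.X ^ i))
          : MvPolynomial (Fin n) k)
        = Polynomial.eval₂ (algebraMap (initAlg w A) (MvPolynomial (Fin n) k)) (lform w g)
          (∑ i ∈ Finset.range (N+1), Polynomial.C (u i) * Polynomial.X ^ i) from rfl]
    rw [Polynomial.hom_eval₂, Polynomial.eval₂_finset_sum]
    have h2 : ∀ i ∈ Finset.range (N+1),
        Polynomial.eval₂
          (((algebraMap (MvPolynomial (Fin n) k)
            (FractionRing (MvPolynomial (Fin n) k)))).comp
            (algebraMap (initAlg w A) (MvPolynomial (Fin n) k)))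
          ((algebraMap (MvPolynomial (Fin n) k) (FractionRing (MvPolynomial (Fin n) k)))
            (lform w g))
          (Polynomial.C (u i) * Polynomial.X ^ i)
        = (algebraMap (KW w A) (FractionRing (MvPolynomial (Fin n) k))) (p.coeff i) *
          (algebraMap (MvPolynomial (Fin n) k) (FractionRing (MvPolynomial (Fin n) k)))
            (∏ j ∈ Finset.range (N+1), b j) *
          ((algebraMap (MvPolynomial (Fin n) k) (FractionRing (MvPolynomial (Fin n) k)))
            (lform w g)) ^ i := by
      intro i hi
      rw [Polynomial.eval₂_mul, Polynomial.eval₂_C, Polynomial.eval₂_X_pow]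
      rw [show (((algebraMap (MvPolynomial (Fin n) k)
            (FractionRing (MvPolynomial (Fin n) k)))).comp
            (algebraMap (initAlg w A) (MvPolynomial (Fin n) k))) (u i)
          = (algebraMap (MvPolynomial (Fin n) k) (FractionRing (MvPolynomial (Fin n) k)))
            ((u i : MvPolynomial (Fin n) k)) from rfl]
      rw [hu i hi]
    rw [Finset.sum_congr rfl h2]
    have h3 : ∑ i ∈ Finset.range (N+1),
        (algebraMap (KW w A) (FractionRing (MvPolynomial (Fin n) k))) (p.coeff i) *
        ((algebraMap (MvPolynomial (Fin n) k) (FractionRing (MvPolynomial (Fin n) k)))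
          (lform w g)) ^ i = 0 := by
      rw [← Polynomial.eval₂_eq_sum_range]
      rw [← Polynomial.aeval_def]
      exact hpe
    calc ∑ i ∈ Finset.range (N+1),
        (algebraMap (KW w A) (FractionRing (MvPolynomial (Fin n) k))) (p.coeff i) *
        (algebraMap (MvPolynomial (Fin n) k) (FractionRing (MvPolynomial (Fin n) k)))
          (∏ j ∈ Finset.range (N+1), b j) *
        ((algebraMap (MvPolynomial (Fin n) k) (FractionRing (MvPolynomial (Fin n) k)))
          (lform w g)) ^ i
        = (algebraMap (MvPolynomial (Fin n) k) (FractionRing (MvPolynomial (Fin n) k)))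
          (∏ j ∈ Finset.range (N+1), b j) *
          ∑ i ∈ Finset.range (N+1),
            (algebraMap (KW w A) (FractionRing (MvPolynomial (Fin n) k))) (p.coeff i) *
            ((algebraMap (MvPolynomial (Fin n) k)
              (FractionRing (MvPolynomial (Fin n) k))) (lform w g)) ^ i := by
          rw [Finset.mul_sum]
          exact Finset.sum_congr rfl (fun i _ => by ring)
    _ = 0 := by rw [h3, mul_zero]

lemma main_aux {w : Fin n → Γ} {A : Subalgebra k (MvPolynomial (Fin n) k)}
    {g : MvPolynomial (Fin n) k} (hg : g ≠ 0)
    {P : Polynomial (initAlg w A)}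
    (hP : RingHom.ker
        (Polynomial.aeval (lform w g) :
          Polynomial (initAlg w A) →ₐ[initAlg w A] MvPolynomial (Fin n) k)
      = Ideal.span {P})
    (hP0 : P ≠ 0) :
    ∀ (m : ℕ) (Φ : Polynomial (MvPolynomial (Fin n) k)), Φ ≠ 0 → (∀ i, Φ.coeff i ∈ A) →
      mwg w g Φ = m →
      ∃ H : Polynomial (initAlg w A),
        (Polynomial.aeval (lform w g) H : MvPolynomial (Fin n) k) ≠ 0 ∧
        pLform w g Φ = Polynomial.map (algebraMap (initAlg w A) (MvPolynomial (Fin n) k))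
          (P ^ m * H) := by
  have hPmem : P ∈ RingHom.ker
      (Polynomial.aeval (lform w g) :
        Polynomial (initAlg w A) →ₐ[initAlg w A] MvPolynomial (Fin n) k) := by
    rw [hP]
    exact Ideal.subset_span rfl
  have hPeval : (Polynomial.aeval (lform w g) P : MvPolynomial (Fin n) k) = 0 :=
    RingHom.mem_ker.1 hPmem
  have hPrime : Prime P := by
    have hker : (Ideal.span {P}).IsPrime := by
      rw [← hP]
      exact RingHom.ker_isPrime
        (F := Polynomial (initAlg w A) →ₐ[initAlg w A] MvPolynomial (Fin n) k)
        (Polynomial.aeval (lform w g))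
    exact (Ideal.span_singleton_prime hP0).1 hker
  have hPdeg : P.natDegree ≠ 0 := by
    intro hd
    have hc := Polynomial.eq_C_of_natDegree_le_zero (le_of_eq hd)
    have heval2 := hPeval
    rw [hc, Polynomial.aeval_C] at heval2
    have hcoe : P.coeff 0 = 0 := Subtype.val_injective heval2
    exact hP0 (by rw [hc, hcoe, map_zero])
  intro m
  induction m with
  | zero =>
    intro Φ hΦ hΦA hm
    have h0S : 0 ∈ SSet w g Φ := by rw [← hm]; exact mwg_mem_SSet hΦ
    have hev : (pLform w g Φ).eval (lform w g) ≠ 0 :=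
      (eval_pLform_ne_zero_iff hΦ hg).2 (zero_mem_SSet_iff.1 h0S).symm
    obtain ⟨Ψ, hΨ⟩ := exists_tilde (w := w) g hΦA
    refine ⟨Ψ, ?_, ?_⟩
    · rw [aeval_eq_eval_map, hΨ]
      exact hev
    · rw [pow_zero, one_mul, hΨ]
  | succ m ih =>
    intro Φ hΦ hΦA hm
    have h0S : 0 ∉ SSet w g Φ := by
      apply Nat.notMem_of_lt_sInf
      rw [← mwg_eq_sInf, hm]
      exact Nat.succ_pos m
    have heval0 : (pLform w g Φ).eval (lform w g) = 0 := by
      by_contra hne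
      exact h0S (zero_mem_SSet_iff.2 ((eval_pLform_ne_zero_iff hΦ hg).1 hne).symm)
    have hM1 := exists_ne_zero_mem_MSet hΦ heval0
    have hdΦ : Polynomial.derivative Φ ≠ 0 := derivative_ne_zero_of_MSet hM1
    have hdA : ∀ i, (Polynomial.derivative Φ).coeff i ∈ A := by
      intro i
      rw [coeff_derivative_eq]
      exact mul_mem (natCast_mem A (i+1)) (hΦA (i+1))
    obtain ⟨H, hHne, hHeq⟩ := ih (Polynomial.derivative Φ) hdΦ hdA (mwg_derivative hm)
    obtain ⟨Ψ, hΨ⟩ := exists_tilde (w := w) g hΦA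
    have hΨ0 : Ψ ≠ 0 := by
      intro h
      rw [h, Polynomial.map_zero] at hΨ
      exact pLform_ne_zero hΦ hΨ.symm
    have hPdvd : P ∣ Ψ := by
      rw [← Ideal.mem_span_singleton, ← hP, RingHom.mem_ker]
      rw [show ((Polynomial.aeval (lform w g)) Ψ : MvPolynomial (Fin n) k)
          = Polynomial.eval (lform w g)
            (Polynomial.map (algebraMap (initAlg w A) (MvPolynomial (Fin n) k)) Ψ) from
        aeval_eq_eval_map _ _]
      rw [hΨ]
      exact heval0
    have hder : Polynomial.derivative Ψ = P ^ m * H := by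
      apply Polynomial.map_injective (algebraMap (initAlg w A) (MvPolynomial (Fin n) k))
        Subtype.val_injective
      rw [← Polynomial.derivative_map, hΨ, ← pLform_derivative hg hM1, hHeq]
    have hHnd : ¬ P ∣ H := by
      intro hdvd
      obtain ⟨V, hV⟩ := hdvd
      apply hHne
      rw [hV, map_mul]
      rw [show ((Polynomial.aeval (lform w g)) P : MvPolynomial (Fin n) k) = 0 from hPeval,
        zero_mul]
    obtain ⟨U, hUeq, hPU⟩ := core_dvd hPrime hPdeg hΨ0 hPdvd hder hHnd
    refine ⟨U, ?_, ?_⟩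
    · intro h0
      apply hPU
      have hUker : U ∈ RingHom.ker
          (Polynomial.aeval (lform w g) :
            Polynomial (initAlg w A) →ₐ[initAlg w A] MvPolynomial (Fin n) k) :=
        RingHom.mem_ker.2 h0
      rw [hP] at hUker
      exact Ideal.mem_span_singleton.1 hUker
    · rw [← hΨ, hUeq]

end Stmt6Aux

/-- If `g^w` is algebraic over `K^w` and the ideal `I(A^w, g^w)` (the kernel of the
substitution map `A^w[y] → k[x]`, `y ↦ g^w`) is principal with generator `P`, then
`Φ^{w,g} = P^m · H` for some `H ∈ A^w[y]` with `H ∉ I(A^w, g^w)`, where `m = m_w^g(Φ)`. -/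
theorem stmt6 (A : Subalgebra k (MvPolynomial (Fin n) k))
    (Φ : Polynomial (MvPolynomial (Fin n) k)) (hΦ : Φ ≠ 0) (hΦA : ∀ i, Φ.coeff i ∈ A)
    (g : MvPolynomial (Fin n) k) (hg : g ≠ 0) (w : Fin n → Γ)
    (halg : IsAlgebraic (KW w A)
      (algebraMap (MvPolynomial (Fin n) k) (FractionRing (MvPolynomial (Fin n) k))
        (lform w g)))
    (P : Polynomial (initAlg w A))
    (hP : RingHom.ker
        (Polynomial.aeval (lform w g) :
          Polynomial (initAlg w A) →ₐ[initAlg w A] MvPolynomial (Fin n) k)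
      = Ideal.span {P}) :
    ∃ H : Polynomial (initAlg w A),
      (Polynomial.aeval (lform w g) H : MvPolynomial (Fin n) k) ≠ 0 ∧
      pLform w g Φ =
        Polynomial.map (algebraMap (initAlg w A) (MvPolynomial (Fin n) k))
          (P ^ (mwg w g Φ) * H) := by

  obtain ⟨Q, hQ0, hQe⟩ := Stmt6Aux.exists_ker_elem halg
  have hP0 : P ≠ 0 := by
    rintro rfl
    have hQker : Q ∈ RingHom.ker
        (Polynomial.aeval (lform w g) :
          Polynomial (initAlg w A) →ₐ[initAlg w A] MvPolynomial (Fin n) k) :=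
      RingHom.mem_ker.2 hQe
    rw [hP] at hQker
    exact hQ0 (zero_dvd_iff.1 (Ideal.mem_span_singleton.1 hQker))
  exact Stmt6Aux.main_aux hg hP hP0 (mwg w g Φ) Φ hΦ hΦA rfl
end
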